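/- arXiv:2107.02587 — 3 statements merged into one kernel-verified Lean document; each statement's English description precedes it below -/
import Mathlib

section
/- Every κ-additive fSC_κ-space is homeomorphic to a closed subset of the generalized Baire space κ^κ; if moreover the space is an SC_κ-space, then it is homeomorphic to a superclosed subset of κ^κ. -/
universe u v

open Cardinal Set

namespace GDST

/-- A *limit element* of an order: an element with some predecessor but
no immediate predecessor (i.e. it sits at a limit position). -/
def IsLimitElt {α : Type v} [LT α] (a : α) : Prop :=
  (∃ b, b < a) ∧ ∀ b, b < a → ∃ c, b < c ∧ c < a

/-- The space `X` has weight at most `κ`: it admits a topological basis of cardinality ≤ κ. -/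
def HasWeightLE (κ : Cardinal.{u}) (X : Type u) [TopologicalSpace X] : Prop :=
  ∃ B : Set (Set X), TopologicalSpace.IsTopologicalBasis B ∧ #B ≤ κ

/-- `X` is `κ`-additive: intersections of fewer than `κ` open sets are open. -/
def KAdditive (κ : Cardinal.{u}) (X : Type u) [TopologicalSpace X] : Prop :=
  ∀ S : Set (Set X), #S < κ → (∀ U ∈ S, IsOpen U) → IsOpen (⋂₀ S)

/-- `X` is `κ`-Lindelöf: every open cover has a subcover of size `< κ`. -/
def KLindelof (κ : Cardinal.{u}) (X : Type u) [TopologicalSpace X] : Prop :=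
  ∀ 𝒰 : Set (Set X), (∀ U ∈ 𝒰, IsOpen U) → ⋃₀ 𝒰 = Set.univ →
    ∃ 𝒱 ⊆ 𝒰, #𝒱 < κ ∧ ⋃₀ 𝒱 = Set.univ

/-- `X` is `κ`-perfect: no point `x` is `κ`-isolated, i.e. no `{x}` is an intersection
of fewer than `κ` open sets. -/
def KPerfect (κ : Cardinal.{u}) (X : Type u) [TopologicalSpace X] : Prop :=
  ∀ x : X, ¬ ∃ S : Set (Set X), #S < κ ∧ (∀ U ∈ S, IsOpen U) ∧ ⋂₀ S = {x}

/-- `A` is `G_δ^κ` in `X`: an intersection of `κ`-many open sets. -/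
def IsGDeltaKappa (κ : Cardinal.{u}) {X : Type u} [TopologicalSpace X] (A : Set X) : Prop :=
  ∃ U : κ.ord.ToType → Set X, (∀ i, IsOpen (U i)) ∧ A = ⋂ i, U i

/-! ### Generalized Baire and Cantor spaces -/

/-- The bounded topology on `ι → A`: generated by the sets of functions with a
prescribed restriction to a proper initial segment `{b | b < a}` of `ι`. -/
def BoundedTopology (ι : Type u) [LinearOrder ι] (A : Type v) : TopologicalSpace (ι → A) :=
  TopologicalSpace.generateFrom
    {U | ∃ (a : ι) (y : ι → A), U = {x : ι → A | ∀ b, b < a → x b = y b}}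

/-- The generalized Baire space `κ^κ`. -/
def GenBaire (κ : Cardinal.{u}) : Type u := κ.ord.ToType → κ.ord.ToType

noncomputable instance (κ : Cardinal.{u}) : TopologicalSpace (GenBaire κ) :=
  BoundedTopology κ.ord.ToType κ.ord.ToType

/-- The generalized Cantor space `2^κ`. -/
def GenCantor (κ : Cardinal.{u}) : Type u := κ.ord.ToType → Bool

noncomputable instance (κ : Cardinal.{u}) : TopologicalSpace (GenCantor κ) :=
  BoundedTopology κ.ord.ToType Bool

/-! ### The strong and fair (strong) κ-Choquet games -/

/-- A transfinite sequence of moves of player I: at each round a pair `(U, x)`. -/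
abbrev IMoves (κ : Cardinal.{u}) (X : Type u) : Type u := κ.ord.ToType → Set X × X

/-- A strategy for player II: given the moves of I (only the moves up to the current
round may be used, see `IsIIStrategy`) and the current round, produce II's move. -/
abbrev Strategy (κ : Cardinal.{u}) (X : Type u) : Type u := IMoves κ X → κ.ord.ToType → Set X

/-- The intersection of the sets played before round `a`. -/
def InterBelow {ι : Type u} {X : Type u} [LT ι] (V : ι → Set X) (a : ι) : Set X :=
  ⋂ b, ⋂ (_ : b < a), V b

/-- `U` is relatively open in `T`. -/
def RelOpenIn {X : Type u} [TopologicalSpace X] (T U : Set X) : Prop :=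
  ∃ W : Set X, IsOpen W ∧ U = W ∩ T

/-- Player I's move at round `a` is legal: `(f a).1` is a nonempty relatively open subset of
the intersection of all previously played sets, and the point `(f a).2` belongs to it. -/
def LegalI {κ : Cardinal.{u}} {X : Type u} [TopologicalSpace X]
    (σ : Strategy κ X) (f : IMoves κ X) (a : κ.ord.ToType) : Prop :=
  RelOpenIn (InterBelow (σ f) a) (f a).1 ∧ (f a).2 ∈ (f a).1

/-- Player II's answer (by `σ`) at round `a` is legal: it is relatively open in the
intersection of all previously played sets, contains I's point, and is contained in I's set. -/
def LegalII {κ : Cardinal.{u}} {X : Type u} [TopologicalSpace X]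
    (σ : Strategy κ X) (f : IMoves κ X) (a : κ.ord.ToType) : Prop :=
  RelOpenIn (InterBelow (σ f) a) (σ f a) ∧ (f a).2 ∈ σ f a ∧ σ f a ⊆ (f a).1

/-- All moves before round `a` were legal. -/
def LegalBelow {κ : Cardinal.{u}} {X : Type u} [TopologicalSpace X]
    (σ : Strategy κ X) (f : IMoves κ X) (a : κ.ord.ToType) : Prop :=
  ∀ b, b < a → LegalI σ f b ∧ LegalII σ f b

/-- `σ` only depends on the moves of I played so far. -/
def IsIIStrategy {κ : Cardinal.{u}} {X : Type u} (σ : Strategy κ X) : Prop :=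
  ∀ f g : IMoves κ X, ∀ a, (∀ b, b ≤ a → f b = g b) → σ f a = σ g a

/-- `σ` is a winning strategy for player II in the strong κ-Choquet game `G^s_κ(X)`:
it answers legally to legal positions, and in any (possibly partial) legal run the
intersection of the played sets at every limit round—including the final one—is nonempty. -/
def WinningStrong {κ : Cardinal.{u}} {X : Type u} [TopologicalSpace X]
    (σ : Strategy κ X) : Prop :=
  IsIIStrategy σ ∧
  (∀ f a, LegalBelow σ f a → LegalI σ f a → LegalII σ f a) ∧
  (∀ f a, IsLimitElt a → LegalBelow σ f a → (InterBelow (σ f) a).Nonempty) ∧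
  (∀ f, (∀ a, LegalI σ f a ∧ LegalII σ f a) → (⋂ a, σ f a).Nonempty)

/-- `σ` is a winning strategy for player II in the fair strong κ-Choquet game `fG^s_κ(X)`:
it answers legally to legal positions, and for every legal run either the intersection of
the played sets is empty at some limit round `< κ`, or the final intersection is nonempty. -/
def WinningFair {κ : Cardinal.{u}} {X : Type u} [TopologicalSpace X]
    (σ : Strategy κ X) : Prop :=
  IsIIStrategy σ ∧
  (∀ f a, LegalBelow σ f a → LegalI σ f a → LegalII σ f a) ∧
  (∀ f, (∀ a, LegalI σ f a ∧ LegalII σ f a) →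
    (∃ a, IsLimitElt a ∧ InterBelow (σ f) a = ∅) ∨ (⋂ a, σ f a).Nonempty)

/-- `X` is a strong κ-Choquet space. -/
def SCSpace (κ : Cardinal.{u}) (X : Type u) [TopologicalSpace X] : Prop :=
  HasWeightLE κ X ∧ ∃ σ : Strategy κ X, WinningStrong σ

/-- `X` is a strongly fair κ-Choquet space. -/
def fSCSpace (κ : Cardinal.{u}) (X : Type u) [TopologicalSpace X] : Prop :=
  HasWeightLE κ X ∧ ∃ σ : Strategy κ X, WinningFair σ

/-! ### Trees on κ -/

/-- Sequences of length `< κ` with values in `κ`, encoded as pairs `(a, x)` representing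
the restriction of `x : κ → κ` to the initial segment `{b | b < a}`. -/
abbrev TreeSeq (κ : Cardinal.{u}) : Type u := κ.ord.ToType × (κ.ord.ToType → κ.ord.ToType)

/-- `T` is a tree on `κ`: membership of `(a, x)` only depends on the restriction of `x`
below `a` (so that `T` really is a set of `<κ`-sequences), and `T` is closed under
initial segments. -/
def IsTreeOn (κ : Cardinal.{u}) (T : Set (TreeSeq κ)) : Prop :=
  (∀ a, ∀ x y : κ.ord.ToType → κ.ord.ToType,
      (∀ b, b < a → x b = y b) → ((a, x) ∈ T ↔ (a, y) ∈ T)) ∧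
  (∀ a x, (a, x) ∈ T → ∀ b, b ≤ a → (b, x) ∈ T)

/-- The body `[T]` of a tree `T` on `κ`. -/
def TreeBody (κ : Cardinal.{u}) (T : Set (TreeSeq κ)) : Set (GenBaire κ) :=
  {x | ∀ a, (a, x) ∈ T}

/-- `T` is pruned: every element has extensions in `T` of every length `< κ`. -/
def TreePruned (κ : Cardinal.{u}) (T : Set (TreeSeq κ)) : Prop :=
  ∀ a x, (a, x) ∈ T → ∀ c, a ≤ c → ∃ y, (∀ b, b < a → y b = x b) ∧ (c, y) ∈ T

/-- `T` is `<κ`-closed: a limit-length sequence all of whose proper initial segments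
lie in `T` lies in `T`. -/
def TreeLtClosed (κ : Cardinal.{u}) (T : Set (TreeSeq κ)) : Prop :=
  ∀ a, IsLimitElt a → ∀ x, (∀ b, b < a → (b, x) ∈ T) → (a, x) ∈ T

/-- `T` is superclosed: a pruned and `<κ`-closed tree. -/
def IsSuperclosedTree (κ : Cardinal.{u}) (T : Set (TreeSeq κ)) : Prop :=
  IsTreeOn κ T ∧ TreePruned κ T ∧ TreeLtClosed κ T

/-- A subset of the generalized Baire space is superclosed if it is the body of a
superclosed tree. -/
def IsSuperclosedSet (κ : Cardinal.{u}) (C : Set (GenBaire κ)) : Prop :=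
  ∃ T : Set (TreeSeq κ), IsSuperclosedTree κ T ∧ C = TreeBody κ T

/-- The `a`-th level of a tree `T` on `κ`. -/
def TreeLev (κ : Cardinal.{u}) (T : Set (TreeSeq κ)) (a : κ.ord.ToType) :
    Set ({b : κ.ord.ToType // b < a} → κ.ord.ToType) :=
  {s | ∃ x, (a, x) ∈ T ∧ ∀ b : {b : κ.ord.ToType // b < a}, x b.1 = s b}

/-- κ has the tree property: every tree on κ all of whose levels are nonempty of size `< κ`
has a (cofinal) branch. -/
def TreeProperty (κ : Cardinal.{u}) : Prop :=
  ∀ T : Set (TreeSeq κ), IsTreeOn κ T →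
    (∀ a, (TreeLev κ T a).Nonempty ∧ #(TreeLev κ T a) < κ) →
    ∃ x : κ.ord.ToType → κ.ord.ToType, ∀ a, (a, x) ∈ T

/-- κ is (strongly) inaccessible. -/
def Inaccessible (κ : Cardinal.{u}) : Prop :=
  ℵ₀ < κ ∧ κ.IsRegular ∧ ∀ μ : Cardinal.{u}, μ < κ → (2 : Cardinal.{u}) ^ μ < κ

/-- κ is weakly compact: inaccessible with the tree property. -/
def WeaklyCompact (κ : Cardinal.{u}) : Prop := Inaccessible κ ∧ TreeProperty κ

/-! ### κ-Borel sets -/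

/-- The κ-Borel subsets of a topological space: the smallest family containing the open
sets and closed under complements and unions of at most κ-many sets. -/
inductive KBorel (κ : Cardinal.{u}) {X : Type u} [TopologicalSpace X] : Set X → Prop
  | of_isOpen (U : Set X) : IsOpen U → KBorel κ U
  | compl (S : Set X) : KBorel κ S → KBorel κ Sᶜ
  | iUnion (ι : Type u) (f : ι → Set X) : #ι ≤ κ → (∀ i, KBorel κ (f i)) → KBorel κ (⋃ i, f i)

/-! ### 𝔾-metric spaces -/

section GMetric

variable (G : Type u) [AddCommGroup G] [LinearOrder G] [IsOrderedAddMonoid G]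

/-- The positive cone of `G` has coinitiality `κ`: there is a coinitial set of positive
elements of size `≤ κ`, and no such set of size `< κ`. -/
def HasDegree (κ : Cardinal.{u}) : Prop :=
  (∃ S : Set G, (∀ ε ∈ S, 0 < ε) ∧ (∀ δ : G, 0 < δ → ∃ ε ∈ S, ε ≤ δ) ∧ #S ≤ κ) ∧
  (∀ S : Set G, (∀ ε ∈ S, 0 < ε) → (∀ δ : G, 0 < δ → ∃ ε ∈ S, ε ≤ δ) → κ ≤ #S)

variable {G}

/-- `d` is a `𝔾`-metric on `X`. -/
structure IsGMetric {X : Type u} (d : X → X → G) : Prop where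
  nonneg : ∀ x y, 0 ≤ d x y
  eq_zero_iff : ∀ x y, d x y = 0 ↔ x = y
  symm : ∀ x y, d x y = d y x
  triangle : ∀ x y z, d x z ≤ d x y + d y z

/-- The open ball of center `x` and radius `ε`. -/
def GBall {X : Type u} (d : X → X → G) (x : X) (ε : G) : Set X := {y | d x y < ε}

/-- The topology induced by a `𝔾`-metric. -/
def GMetricTopology {X : Type u} (d : X → X → G) : TopologicalSpace X :=
  TopologicalSpace.generateFrom {U | ∃ x ε, 0 < ε ∧ U = GBall d x ε}

/-- The `𝔾`-metric `d` is compatible with the topology of `X`. -/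
def GCompatible {X : Type u} [t : TopologicalSpace X] (d : X → X → G) : Prop :=
  GMetricTopology d = t

/-- A `κ`-sequence is `d`-Cauchy. -/
def GCauchy (κ : Cardinal.{u}) {X : Type u} (d : X → X → G) (x : κ.ord.ToType → X) : Prop :=
  ∀ ε : G, 0 < ε → ∃ a, ∀ b, a ≤ b → ∀ c, a ≤ c → d (x b) (x c) < ε

/-- A `κ`-sequence `d`-converges to `y`. -/
def GConvergesTo (κ : Cardinal.{u}) {X : Type u} (d : X → X → G)
    (x : κ.ord.ToType → X) (y : X) : Prop :=
  ∀ ε : G, 0 < ε → ∃ a, ∀ b, a ≤ b → d (x b) y < ε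

/-- `d` is Cauchy-complete: every `d`-Cauchy `κ`-sequence converges. -/
def GCauchyComplete (κ : Cardinal.{u}) {X : Type u} (d : X → X → G) : Prop :=
  ∀ x : κ.ord.ToType → X, GCauchy κ d x → ∃ y, GConvergesTo κ d x y

/-- `X` is `𝔾`-metrizable: it admits a compatible `𝔾`-metric. -/
def GMetrizable (G : Type u) [AddCommGroup G] [LinearOrder G] [IsOrderedAddMonoid G]
    (X : Type u) [TopologicalSpace X] : Prop :=
  ∃ d : X → X → G, IsGMetric d ∧ GCompatible d

/-- `X` is `𝔾`-Polish: it has weight `≤ κ` and admits a compatible Cauchy-complete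
`𝔾`-metric. -/
def GPolish (G : Type u) [AddCommGroup G] [LinearOrder G] [IsOrderedAddMonoid G] (κ : Cardinal.{u})
    (X : Type u) [TopologicalSpace X] : Prop :=
  HasWeightLE κ X ∧ ∃ d : X → X → G, IsGMetric d ∧ GCompatible d ∧ GCauchyComplete κ d

/-- `d` is spherically complete: every (nonempty) ⊆-decreasing transfinite sequence of open
`d`-balls has nonempty intersection. -/
def SphericallyComplete {X : Type u} (d : X → X → G) : Prop :=
  ∀ o : Ordinal.{u}, o ≠ 0 → ∀ c : o.ToType → Set X,
    (∀ i, ∃ x ε, 0 < ε ∧ c i = GBall d x ε) →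
    (∀ i j, i ≤ j → c j ⊆ c i) → (⋂ i, c i).Nonempty

/-- `d` is spherically `<κ`-complete: every (nonempty) ⊆-decreasing sequence of open
`d`-balls of length `< κ` has nonempty intersection. -/
def SphericallyLtComplete (κ : Cardinal.{u}) {X : Type u} (d : X → X → G) : Prop :=
  ∀ o : Ordinal.{u}, o ≠ 0 → o < κ.ord → ∀ c : o.ToType → Set X,
    (∀ i, ∃ x ε, 0 < ε ∧ c i = GBall d x ε) →
    (∀ i j, i ≤ j → c j ⊆ c i) → (⋂ i, c i).Nonempty

/-- `X` is a spherically complete `𝔾`-Polish space. -/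
def GPolishSphericallyComplete (G : Type u) [AddCommGroup G] [LinearOrder G] [IsOrderedAddMonoid G] (κ : Cardinal.{u})
    (X : Type u) [TopologicalSpace X] : Prop :=
  HasWeightLE κ X ∧
    ∃ d : X → X → G, IsGMetric d ∧ GCompatible d ∧ GCauchyComplete κ d ∧ SphericallyComplete d

/-- `X` is a spherically `<κ`-complete `𝔾`-Polish space. -/
def GPolishSphericallyLtComplete (G : Type u) [AddCommGroup G] [LinearOrder G] [IsOrderedAddMonoid G] (κ : Cardinal.{u})
    (X : Type u) [TopologicalSpace X] : Prop :=
  HasWeightLE κ X ∧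
    ∃ d : X → X → G, IsGMetric d ∧ GCompatible d ∧ GCauchyComplete κ d ∧
      SphericallyLtComplete κ d

end GMetric

/-! ### κ-Borel spaces -/

/-- `ℬ` is a `κ⁺`-algebra on `X`: closed under complements and unions of at most
κ-many sets. -/
def IsKplusAlgebra (κ : Cardinal.{u}) {X : Type u} (ℬ : Set (Set X)) : Prop :=
  (∀ S ∈ ℬ, Sᶜ ∈ ℬ) ∧
  (∀ (ι : Type u) (f : ι → Set X), #ι ≤ κ → (∀ i, f i ∈ ℬ) → (⋃ i, f i) ∈ ℬ)

/-- `ℬ` separates the points of `X`. -/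
def SepPoints {X : Type u} (ℬ : Set (Set X)) : Prop :=
  ∀ x y : X, x ≠ y → ∃ S ∈ ℬ, x ∈ S ∧ y ∉ S

/-- `(X, ℬ)` is a κ-Borel space: a `κ⁺`-algebra that separates points and is generated
(as a `κ⁺`-algebra) by a subfamily of size `≤ κ`. -/
def IsKBorelSpace (κ : Cardinal.{u}) {X : Type u} (ℬ : Set (Set X)) : Prop :=
  IsKplusAlgebra κ ℬ ∧ SepPoints ℬ ∧
    ∃ 𝒢 ⊆ ℬ, #𝒢 ≤ κ ∧
      ∀ ℬ' : Set (Set X), IsKplusAlgebra κ ℬ' → 𝒢 ⊆ ℬ' → ℬ ⊆ ℬ'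

/-- The restriction `ℬ↾A` of a family of subsets of `X` to `A ⊆ X`. -/
def RestrictFam {X : Type u} (ℬ : Set (Set X)) (A : Set X) : Set (Set ↥A) :=
  {T | ∃ S ∈ ℬ, T = Subtype.val ⁻¹' S}

/-- The family of κ-Borel sets of a topological space. -/
def KBorelFam (κ : Cardinal.{u}) (X : Type u) [TopologicalSpace X] : Set (Set X) :=
  {S | KBorel κ S}

/-- `e` is a κ-Borel isomorphism between `(X, ℬ)` and `(Y, 𝒞)`: a bijection under which
images and preimages of distinguished sets are distinguished. -/
def IsKBorelSpaceIso {X Y : Type u} (ℬ : Set (Set X)) (𝒞 : Set (Set Y)) (e : X ≃ Y) : Prop :=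
  (∀ S ∈ ℬ, e '' S ∈ 𝒞) ∧ (∀ S ∈ 𝒞, e ⁻¹' S ∈ ℬ)

/-- `(X, ℬ)` is a standard κ-Borel space: it is a κ-Borel space which is κ-Borel isomorphic
to a κ-Borel subset of the generalized Baire space (with the restricted κ-Borel structure). -/
def IsStandardKBorel (κ : Cardinal.{u}) {X : Type u} (ℬ : Set (Set X)) : Prop :=
  IsKBorelSpace κ ℬ ∧
    ∃ B₀ : Set (GenBaire κ), KBorel κ B₀ ∧
      ∃ e : X ≃ ↥B₀, IsKBorelSpaceIso ℬ (RestrictFam (KBorelFam κ (GenBaire κ)) B₀) e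


namespace Stmt4

abbrev Ix (κ : Cardinal.{u}) : Type u := κ.ord.ToType

variable {κ : Cardinal.{u}}

lemma mk_Ix : #(Ix κ) = κ := by
  rw [Cardinal.mk_toType, Cardinal.card_ord]

lemma ix_nonempty (hunc : ℵ₀ < κ) : Nonempty (Ix κ) := by
  refine Ordinal.toType_nonempty_iff_ne_zero.mpr ?_
  simp only [ne_eq, Cardinal.ord_eq_zero]
  rintro rfl
  exact absurd hunc (by simp)

lemma mk_Iio_lt (b : Ix κ) : #{a : Ix κ // a < b} < κ :=
  Cardinal.mk_Iio_ord_toType b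

lemma exists_bound (hreg : κ.IsRegular) {s : Set (Ix κ)} (hs : #s < κ) :
    ∃ b : Ix κ, ∀ a ∈ s, a < b := by
  have hcof : κ.ord.cof = κ := hreg.cof_eq
  have hlim : Order.IsSuccLimit κ.ord := Cardinal.isSuccLimit_ord hreg.aleph0_le
  set e := Ordinal.ToType.mk (o := κ.ord) with he
  set f : s → Ordinal.{u} := fun a => ((e.symm a.1 : Set.Iio κ.ord) : Ordinal.{u}) + 1 with hf
  have hfl : ∀ a : s, f a < κ.ord := fun a => hlim.succ_lt (e.symm a.1).2
  have hsup : iSup f < κ.ord := Ordinal.iSup_lt_ord (by rwa [hcof]) hfl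
  refine ⟨e ⟨iSup f, hsup⟩, ?_⟩
  intro a ha
  have h1 : ((e.symm a : Set.Iio κ.ord) : Ordinal.{u}) < iSup f :=
    lt_of_lt_of_le (lt_add_one _) (le_ciSup Ordinal.bddAbove_of_small (⟨a, ha⟩ : s))
  have h2 : e.symm a < (⟨iSup f, hsup⟩ : Set.Iio κ.ord) := by
    exact Subtype.mk_lt_mk.mpr h1
  calc a = e (e.symm a) := (e.apply_symm_apply a).symm
    _ < e ⟨iSup f, hsup⟩ := e.strictMono h2

lemma no_max (hreg : κ.IsRegular) (hunc : ℵ₀ < κ) (a : Ix κ) : ∃ b : Ix κ, a < b := by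
  obtain ⟨b, hb⟩ := exists_bound hreg (s := {a}) (by
    simpa using lt_of_lt_of_le Cardinal.one_lt_aleph0 hunc.le)
  exact ⟨b, hb a rfl⟩

/-- successor in `Ix κ`. -/
noncomputable def suc (hreg : κ.IsRegular) (hunc : ℵ₀ < κ) (a : Ix κ) : Ix κ :=
  (wellFounded_lt).min {b : Ix κ | a < b} (no_max hreg hunc a)

lemma lt_suc (hreg : κ.IsRegular) (hunc : ℵ₀ < κ) (a : Ix κ) : a < suc hreg hunc a :=
  (wellFounded_lt).min_mem _ (no_max hreg hunc a)

lemma lt_suc_iff (hreg : κ.IsRegular) (hunc : ℵ₀ < κ) {a b : Ix κ} :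
    b < suc hreg hunc a ↔ b ≤ a := by
  constructor
  · intro hb
    by_contra hab
    push_neg at hab
    exact (wellFounded_lt).not_lt_min {b : Ix κ | a < b} hab hb
  · intro hb
    exact lt_of_le_of_lt hb (lt_suc hreg hunc a)

lemma suc_le_of_lt (hreg : κ.IsRegular) (hunc : ℵ₀ < κ) {a b : Ix κ} (h : a < b) :
    suc hreg hunc a ≤ b := by
  by_contra hc
  push_neg at hc
  exact absurd ((lt_suc_iff hreg hunc).mp hc) (not_le.mpr h)

/-- if `m` is the maximum element below `α`, then `α = suc m`. -/
lemma eq_suc_of_max_below (hreg : κ.IsRegular) (hunc : ℵ₀ < κ) {m α : Ix κ}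
    (h1 : m < α) (h2 : ∀ γ, γ < α → γ ≤ m) : α = suc hreg hunc m := by
  have hle : suc hreg hunc m ≤ α := suc_le_of_lt hreg hunc h1
  rcases lt_or_eq_of_le hle with h | h
  · exact absurd (h2 _ h) (not_le.mpr (lt_suc hreg hunc m))
  · exact h.symm

lemma max_below_suc (hreg : κ.IsRegular) (hunc : ℵ₀ < κ) (a : Ix κ) :
    a < suc hreg hunc a ∧ ∀ γ, γ < suc hreg hunc a → γ ≤ a :=
  ⟨lt_suc hreg hunc a, fun _ hγ => (lt_suc_iff hreg hunc).mp hγ⟩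

lemma two_pow_le (hpow : (2 : Cardinal.{u}) ^< κ = κ) {μ : Cardinal.{u}} (h : μ < κ) :
    (2 : Cardinal.{u}) ^ μ ≤ κ := hpow ▸ Cardinal.le_powerlt 2 h

lemma pow_aleph0_le (hunc : ℵ₀ < κ) (hpow : (2 : Cardinal.{u}) ^< κ = κ)
    {μ : Cardinal.{u}} (h : μ < κ) : μ ^ (ℵ₀ : Cardinal.{u}) ≤ κ := by
  calc μ ^ (ℵ₀ : Cardinal.{u}) ≤ (2 ^ μ) ^ (ℵ₀ : Cardinal.{u}) :=
        Cardinal.power_le_power_right (Cardinal.cantor μ).le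
    _ = 2 ^ (μ * ℵ₀) := (Cardinal.power_mul).symm
    _ ≤ κ := two_pow_le hpow (Cardinal.mul_lt_of_lt hunc.le h hunc)

lemma mk_nat_funcs (hreg : κ.IsRegular) (hunc : ℵ₀ < κ)
    (hpow : (2 : Cardinal.{u}) ^< κ = κ) : #(ℕ → Ix κ) ≤ κ := by
  classical
  have hbd : ∀ f : ℕ → Ix κ, ∃ b : Ix κ, ∀ n, f n < b := by
    intro f
    obtain ⟨b, hb⟩ := exists_bound hreg (s := Set.range f)
      (lt_of_le_of_lt (Set.Countable.le_aleph0 (Set.countable_range f)) hunc)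
    exact ⟨b, fun n => hb _ ⟨n, rfl⟩⟩
  set F : (ℕ → Ix κ) → Σ b : Ix κ, (ℕ → {a : Ix κ // a < b}) := fun f =>
    ⟨(hbd f).choose, fun n => ⟨f n, (hbd f).choose_spec n⟩⟩ with hF
  have hFinj : Function.Injective F := by
    intro f g hfg
    funext n
    have := congr_arg (fun p : Σ b : Ix κ, (ℕ → {a : Ix κ // a < b}) => ((p.2 n : {a : Ix κ // a < p.1}) : Ix κ)) hfg
    exact this
  have h1 : #(ℕ → Ix κ) ≤ #(Σ b : Ix κ, (ℕ → {a : Ix κ // a < b})) := Cardinal.mk_le_of_injective hFinj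
  refine h1.trans ?_
  rw [Cardinal.mk_sigma]
  calc Cardinal.sum (fun b : Ix κ => #(ℕ → {a : Ix κ // a < b}))
      ≤ Cardinal.sum (fun _ : Ix κ => κ) := by
        apply Cardinal.sum_le_sum
        intro b
        have he : (ℕ → {a : Ix κ // a < b}) ≃ (ULift.{u} ℕ → {a : Ix κ // a < b}) :=
          Equiv.arrowCongr Equiv.ulift.symm (Equiv.refl _)
        have : #(ℕ → {a : Ix κ // a < b}) = #{a : Ix κ // a < b} ^ (ℵ₀ : Cardinal.{u}) := by
          rw [Cardinal.mk_congr he, ← Cardinal.power_def, Cardinal.mk_denumerable (ULift.{u} ℕ)]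
        rw [this]
        exact pow_aleph0_le hunc hpow (mk_Iio_lt b)
    _ = κ * κ := by rw [Cardinal.sum_const, mk_Ix]; simp
    _ = κ := Cardinal.mul_eq_self hunc.le

lemma mk_patterns (hreg : κ.IsRegular) (hunc : ℵ₀ < κ)
    (hpow : (2 : Cardinal.{u}) ^< κ = κ) :
    #(Σ b : Ix κ, ({a : Ix κ // a < b} → Bool)) ≤ κ := by
  rw [Cardinal.mk_sigma]
  calc Cardinal.sum (fun b : Ix κ => #({a : Ix κ // a < b} → Bool))
      ≤ Cardinal.sum (fun _ : Ix κ => κ) := by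
        apply Cardinal.sum_le_sum
        intro b
        have he : ({a : Ix κ // a < b} → Bool) ≃ ({a : Ix κ // a < b} → ULift.{u} Bool) :=
          Equiv.arrowCongr (Equiv.refl _) Equiv.ulift.symm
        have : #({a : Ix κ // a < b} → Bool) = (2 : Cardinal.{u}) ^ #{a : Ix κ // a < b} := by
          rw [Cardinal.mk_congr he, ← Cardinal.power_def]
          congr 1
          rw [Cardinal.mk_fintype]
          simp
        rw [this]
        exact two_pow_le hpow (mk_Iio_lt b)
    _ = κ * κ := by rw [Cardinal.sum_const, mk_Ix]; simp
    _ = κ := Cardinal.mul_eq_self hunc.le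

lemma exists_surj {α : Type u} (hne : Nonempty α) (h : #α ≤ κ) :
    ∃ g : Ix κ → α, Function.Surjective g := by
  classical
  have h' : #α ≤ #(Ix κ) := by rwa [mk_Ix]
  obtain ⟨e⟩ := (Cardinal.le_def _ _).mp h'
  refine ⟨fun i => if h : ∃ a, e a = i then h.choose else hne.some, fun a => ⟨e a, ?_⟩⟩
  have h1 : ∃ a', e a' = e a := ⟨a, rfl⟩
  simp only [dif_pos h1]
  exact e.injective h1.choose_spec

section TopologyX

variable {κ : Cardinal.{u}} {X : Type u} [TopologicalSpace X]

lemma kInter_open (hadd : KAdditive κ X) {ι : Type u} (hι : #ι < κ)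
    (f : ι → Set X) (hf : ∀ i, IsOpen (f i)) : IsOpen (⋂ i, f i) := by
  have h : (⋂ i, f i) = ⋂₀ (Set.range f) := by
    rw [Set.sInter_range]
  rw [h]
  exact hadd _ (lt_of_le_of_lt Cardinal.mk_range_le hι) (by rintro U ⟨i, rfl⟩; exact hf i)

lemma kInter_clopen (hadd : KAdditive κ X) {ι : Type u} (hι : #ι < κ)
    (f : ι → Set X) (hf : ∀ i, IsClopen (f i)) : IsClopen (⋂ i, f i) :=
  ⟨isClosed_iInter fun i => (hf i).isClosed, kInter_open hadd hι f fun i => (hf i).isOpen⟩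

/-- In a regular κ-additive space of weight `≤ κ`, there is a `κ`-indexed family of clopen
sets forming a basis. -/
lemma exists_clopen_basis (hreg : κ.IsRegular) (hunc : ℵ₀ < κ)
    (hpow : (2 : Cardinal.{u}) ^< κ = κ)
    [T2Space X] [RegularSpace X] (hadd : KAdditive κ X)
    (hX : Nonempty X) (hw : HasWeightLE κ X) :
    ∃ W : Ix κ → Set X, (∀ i, IsClopen (W i)) ∧
      (∀ (x : X) (U : Set X), x ∈ U → IsOpen U → ∃ i, x ∈ W i ∧ W i ⊆ U) := by
  classical
  obtain ⟨Bs, hB, hBc⟩ := hw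
  -- enumerate the basis by Ix κ
  have hBne : Nonempty ↥Bs := by
    obtain ⟨x⟩ := hX
    obtain ⟨v, hv, hxv, _⟩ := hB.exists_subset_of_mem_open (Set.mem_univ x) isOpen_univ
    exact ⟨⟨v, hv⟩⟩
  obtain ⟨g, hg⟩ := exists_surj hBne hBc
  set b : Ix κ → Set X := fun i => (g i : Set X) with hb
  have hbmem : ∀ i, b i ∈ Bs := fun i => (g i).2
  have hbsurj : ∀ S ∈ Bs, ∃ i, b i = S := by
    intro S hS
    obtain ⟨i, hi⟩ := hg ⟨S, hS⟩
    exact ⟨i, by show ((g i : Set X)) = S; rw [hi]⟩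
  -- chains
  set OKc : (ℕ → Ix κ) → Prop := fun c => ∀ n, closure (b (c (n + 1))) ⊆ b (c n) with hOKc
  set Wc : (ℕ → Ix κ) → Set X := fun c => if OKc c then ⋂ n, b (c n) else ∅ with hWc
  have hWclopen : ∀ c, IsClopen (Wc c) := by
    intro c
    show IsClopen (if OKc c then ⋂ n, b (c n) else ∅)
    split_ifs with h
    · constructor
      · have heq : (⋂ n, b (c n)) = ⋂ n, closure (b (c n)) := by
          apply Set.Subset.antisymm
          · exact Set.iInter_mono fun n => subset_closure
          · intro x hx
            apply Set.mem_iInter.mpr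
            intro n
            exact h n (Set.mem_iInter.mp hx (n + 1))
        rw [heq]
        exact isClosed_iInter fun n => isClosed_closure
      · have heq2 : (⋂ n, b (c n)) = ⋂ (m : ULift.{u} ℕ), b (c m.down) := by
          apply Set.Subset.antisymm
          · intro x hx; exact Set.mem_iInter.mpr fun m => Set.mem_iInter.mp hx m.down
          · intro x hx; exact Set.mem_iInter.mpr fun n => Set.mem_iInter.mp hx (ULift.up n)
        rw [heq2]
        apply kInter_open hadd
        · exact lt_of_le_of_lt (le_of_eq (Cardinal.mk_denumerable (ULift.{u} ℕ))) hunc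
        · exact fun m => hB.isOpen (hbmem (c m.down))
    · exact isClopen_empty
  -- basis property
  have hstep : ∀ (x : X) (i : Ix κ), x ∈ b i → ∃ j, (x ∈ b j ∧ closure (b j) ⊆ b i) := by
    intro x i hx
    have hnb : b i ∈ nhds x := (hB.isOpen (hbmem i)).mem_nhds hx
    obtain ⟨t, ht, htc, hts⟩ := exists_mem_nhds_isClosed_subset hnb
    have hxint : x ∈ interior t := mem_interior_iff_mem_nhds.mpr ht
    obtain ⟨v, hv, hxv, hvs⟩ := hB.exists_subset_of_mem_open hxint isOpen_interior
    obtain ⟨j, hj⟩ := hbsurj v hv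
    refine ⟨j, by rwa [hj], ?_⟩
    rw [hj]
    calc closure v ⊆ closure (interior t) := closure_mono hvs
      _ ⊆ closure t := closure_mono interior_subset
      _ = t := htc.closure_eq
      _ ⊆ b i := hts
  have hbasisWc : ∀ (x : X) (U : Set X), x ∈ U → IsOpen U →
      ∃ c, OKc c ∧ x ∈ Wc c ∧ Wc c ⊆ U := by
    intro x U hxU hU
    obtain ⟨v0, hv0, hxv0, hv0U⟩ := hB.exists_subset_of_mem_open hxU hU
    obtain ⟨i0, hi0⟩ := hbsurj v0 hv0
    -- build the chain by recursion
    have hrec : ∀ p : {i : Ix κ // x ∈ b i}, ∃ j : {i : Ix κ // x ∈ b i},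
        closure (b j.1) ⊆ b p.1 := by
      rintro ⟨i, hi⟩
      obtain ⟨j, hj1, hj2⟩ := hstep x i hi
      exact ⟨⟨j, hj1⟩, hj2⟩
    set cs : ℕ → {i : Ix κ // x ∈ b i} := fun n =>
      Nat.rec (⟨i0, by rwa [hi0]⟩ : {i : Ix κ // x ∈ b i})
        (fun _ p => (hrec p).choose) n with hcs
    have hchain : ∀ n, closure (b (cs (n+1)).1) ⊆ b (cs n).1 := by
      intro n
      have : cs (n+1) = (hrec (cs n)).choose := rfl
      rw [this]
      exact (hrec (cs n)).choose_spec
    set c : ℕ → Ix κ := fun n => (cs n).1 with hc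
    have hok : OKc c := fun n => hchain n
    refine ⟨c, hok, ?_, ?_⟩
    · show x ∈ (if OKc c then ⋂ n, b (c n) else ∅)
      rw [if_pos hok]
      exact Set.mem_iInter.mpr fun n => (cs n).2
    · show (if OKc c then ⋂ n, b (c n) else ∅) ⊆ U
      rw [if_pos hok]
      intro z hz
      have : z ∈ b (c 0) := Set.mem_iInter.mp hz 0
      have hc0 : c 0 = i0 := rfl
      rw [hc0, hi0] at this
      exact hv0U this
  -- reindex
  obtain ⟨z⟩ := ix_nonempty hunc
  obtain ⟨s, hs⟩ := exists_surj (⟨fun _ => z⟩ :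
      Nonempty (ℕ → Ix κ)) (mk_nat_funcs hreg hunc hpow)
  refine ⟨fun i => Wc (s i), fun i => hWclopen (s i), ?_⟩
  intro x U hxU hU
  obtain ⟨c, _, hxc, hcU⟩ := hbasisWc x U hxU hU
  obtain ⟨i, hi⟩ := hs c
  exact ⟨i, by show x ∈ Wc (s i); rw [hi]; exact hxc,
    by show Wc (s i) ⊆ U; rw [hi]; exact hcU⟩

end TopologyX
section Atoms

variable {κ : Cardinal.{u}} {X : Type u} [TopologicalSpace X]

/-- the `b`-th atom of `x` with respect to the family `W`. -/
def atm (W : Ix κ → Set X) (b : Ix κ) (x : X) : Set X :=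
  {u | ∀ a, a < b → (u ∈ W a ↔ x ∈ W a)}

variable {W : Ix κ → Set X}

lemma mem_atm_self (b : Ix κ) (x : X) : x ∈ atm W b x := fun _ _ => Iff.rfl

lemma atm_mono {b b' : Ix κ} (h : b ≤ b') (x : X) : atm W b' x ⊆ atm W b x :=
  fun _ hu a ha => hu a (lt_of_lt_of_le ha h)

lemma atm_symm {b : Ix κ} {x u : X} (h : u ∈ atm W b x) : x ∈ atm W b u :=
  fun a ha => (h a ha).symm

lemma atm_eq_of_mem {b : Ix κ} {x u : X} (h : u ∈ atm W b x) : atm W b u = atm W b x := by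
  ext v
  constructor
  · intro hv a ha
    exact (hv a ha).trans (h a ha)
  · intro hv a ha
    exact (hv a ha).trans ((h a ha).symm)

lemma atm_clopen (hadd : KAdditive κ X) (hW : ∀ i, IsClopen (W i)) (b : Ix κ) (x : X) :
    IsClopen (atm W b x) := by
  classical
  have heq : atm W b x = ⋂ (a : {a : Ix κ // a < b}),
      (if x ∈ W a.1 then W a.1 else (W a.1)ᶜ) := by
    ext u
    simp only [Set.mem_iInter, atm, Set.mem_setOf_eq]
    constructor
    · intro hu a
      by_cases hx : x ∈ W a.1
      · rw [if_pos hx]; exact (hu a.1 a.2).mpr hx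
      · rw [if_neg hx]; exact fun hc => hx ((hu a.1 a.2).mp hc)
    · intro hu a ha
      have := hu ⟨a, ha⟩
      by_cases hx : x ∈ W a
      · rw [if_pos hx] at this; exact ⟨fun _ => hx, fun _ => this⟩
      · rw [if_neg hx] at this; exact ⟨fun hc => absurd hc this, fun hc => absurd hc hx⟩
  rw [heq]
  apply kInter_clopen hadd (mk_Iio_lt b)
  intro a
  by_cases hx : x ∈ W a.1
  · rw [if_pos hx]; exact hW a.1
  · rw [if_neg hx]; exact (hW a.1).compl

lemma atm_subset_of_mem {b a : Ix κ} (ha : a < b) {x : X} (hx : x ∈ W a) :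
    atm W b x ⊆ W a := fun _ hu => (hu a ha).mpr hx

/-- atoms refine every open set, with levels above any prescribed bound. -/
lemma atm_nbhd (hreg : κ.IsRegular) (hunc : ℵ₀ < κ)
    (hWb : ∀ (x : X) (U : Set X), x ∈ U → IsOpen U → ∃ i, x ∈ W i ∧ W i ⊆ U)
    {x : X} {U : Set X} (hxU : x ∈ U) (hU : IsOpen U) (β : Ix κ) :
    ∃ b, β < b ∧ atm W b x ⊆ U := by
  obtain ⟨i, hxi, hiU⟩ := hWb x U hxU hU
  refine ⟨suc hreg hunc (max i β), ?_, ?_⟩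
  · exact lt_of_le_of_lt (le_max_right i β) (lt_suc hreg hunc _)
  · refine subset_trans (atm_subset_of_mem ?_ hxi) hiU
    exact lt_of_le_of_lt (le_max_left i β) (lt_suc hreg hunc _)

lemma atm_sep [T2Space X] (hreg : κ.IsRegular) (hunc : ℵ₀ < κ)
    (hWb : ∀ (x : X) (U : Set X), x ∈ U → IsOpen U → ∃ i, x ∈ W i ∧ W i ⊆ U)
    {x u : X} (h : ∀ b, u ∈ atm W b x) : u = x := by
  by_contra hne
  obtain ⟨V1, V2, hV1, hV2, hxV1, huV2, hdisj⟩ := t2_separation (Ne.symm hne)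
  obtain ⟨i, hxi, hiV1⟩ := hWb x V1 hxV1 hV1
  have hu : u ∈ W i := (h (suc hreg hunc i) i (lt_suc hreg hunc i)).mpr hxi
  have : u ∈ V1 := hiV1 hu
  exact Set.disjoint_left.mp hdisj this huV2

end Atoms
section Construction

attribute [local instance] Classical.propDecidable

variable {κ : Cardinal.{u}} {X : Type u} [TopologicalSpace X]

/-- all data needed for the strategic tree construction. -/
structure Setup (κ : Cardinal.{u}) (X : Type u) [TopologicalSpace X] : Type u where
  hreg : κ.IsRegular
  hunc : ℵ₀ < κ
  hpow : (2 : Cardinal.{u}) ^< κ = κ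
  W : Ix κ → Set X
  σ : Strategy κ X
  x0 : X

variable (S : Setup κ X)

noncomputable def jnk : Ix κ := Classical.choice (ix_nonempty S.hunc)

noncomputable def ssuc (a : Ix κ) : Ix κ := suc S.hreg S.hunc a

lemma lt_ssuc (a : Ix κ) : a < ssuc S a := lt_suc S.hreg S.hunc a

lemma lt_ssuc_iff {a b : Ix κ} : b < ssuc S a ↔ b ≤ a := lt_suc_iff S.hreg S.hunc

lemma ssuc_le_of_lt {a b : Ix κ} (h : a < b) : ssuc S a ≤ b := suc_le_of_lt S.hreg S.hunc h

/-- canonical indexing function of a small family of sets. -/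
noncomputable def embOf (s : Set (Set X)) (p : Set X) : Ix κ :=
  if h : Nonempty (↥s ↪ Ix κ) then
    (if hp : p ∈ s then (Classical.choice h) ⟨p, hp⟩ else jnk S) else jnk S

lemma embOf_inj {s : Set (Set X)} (hn : Nonempty (↥s ↪ Ix κ)) {p q : Set X}
    (hp : p ∈ s) (hq : q ∈ s) (h : embOf S s p = embOf S s q) : p = q := by
  rw [embOf, embOf, dif_pos hn, dif_pos hp, dif_pos hn, dif_pos hq] at h
  have := (Classical.choice hn).injective h
  exact congr_arg Subtype.val this

lemma emb_of_small {s : Set (Set X)} (h : #↥s ≤ κ) : Nonempty (↥s ↪ Ix κ) := by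
  rw [← mk_Ix (κ := κ)] at h
  exact (Cardinal.le_def _ _).mp h

/-! data access -/

noncomputable def gC (g : Ix κ → Option (Set X × X)) (β : Ix κ) : Set X :=
  ((g β).map Prod.fst).getD ∅

noncomputable def gW (g : Ix κ → Option (Set X × X)) (β : Ix κ) : X :=
  ((g β).map Prod.snd).getD S.x0

noncomputable def gH (g : Ix κ → Option (Set X × X)) : IMoves κ X :=
  fun β => (gC g β, gW S g (ssuc S β))

/-! successor-step components; `Vf : X → Set X` is the response function. -/

noncomputable def lvlV (C : Set X) (b : Ix κ) (x : X) (V : Set X) : Ix κ :=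
  if h : ∃ c, b < c ∧ atm S.W c x ∩ C ⊆ V then h.choose else jnk S

noncomputable def PV (C : Set X) (b : Ix κ) (x : X) (V : Set X) : Set X :=
  atm S.W (lvlV S C b x V) x ∩ C

def dSetV (C : Set X) (b : Ix κ) (Vf : X → Set X) (x : X) : Set (Ix κ) :=
  {c | ∃ x' ∈ C, lvlV S C b x' (Vf x') = c ∧ x ∈ PV S C b x' (Vf x')}

noncomputable def dV (C : Set X) (b : Ix κ) (Vf : X → Set X) (x : X) : Ix κ :=
  if h : (dSetV S C b Vf x).Nonempty then (wellFounded_lt).min _ h else jnk S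

noncomputable def QV (C : Set X) (b : Ix κ) (Vf : X → Set X) (x : X) : Set X :=
  atm S.W (dV S C b Vf x) x ∩ C

def PiecesV (C : Set X) (b : Ix κ) (Vf : X → Set X) : Set (Set X) :=
  {p | ∃ x ∈ C, p = QV S C b Vf x}

noncomputable def idxV (C : Set X) (b : Ix κ) (Vf : X → Set X) (x : X) : Ix κ :=
  embOf S (PiecesV S C b Vf) (QV S C b Vf x)

noncomputable def stepSuccV (C : Set X) (b : Ix κ) (Vf : X → Set X) (iy : Ix κ) :
    Option (Set X × X) :=
  if hp : ∃ p ∈ PiecesV S C b Vf, embOf S (PiecesV S C b Vf) p = iy then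
    if hw : ∃ x', x' ∈ C ∧ PV S C b x' (Vf x') = hp.choose then
      some (hp.choose, hw.choose)
    else none
  else none

/-- the response of II when I plays `(C, x)` at round `b` after the moves `mv`. -/
noncomputable def VF (mv : IMoves κ X) (C : Set X) (b : Ix κ) (x : X) : Set X :=
  S.σ (fun β => if β < b then mv β else (C, x)) b

noncomputable def stepSucc (mv : IMoves κ X) (C : Set X) (b : Ix κ) (iy : Ix κ) :
    Option (Set X × X) :=
  stepSuccV S C b (VF S mv C b) iy

lemma VF_congr {mv mv' : IMoves κ X} {C : Set X} {b : Ix κ}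
    (h : ∀ β, β < b → mv β = mv' β) : VF S mv C b = VF S mv' C b := by
  funext x
  have h2 : (fun β => if β < b then mv β else (C, x))
      = (fun β => if β < b then mv' β else (C, x)) := by
    funext β
    by_cases hβ : β < b
    · rw [if_pos hβ, if_pos hβ, h β hβ]
    · rw [if_neg hβ, if_neg hβ]
  rw [VF, VF, h2]

lemma stepSucc_congr {mv mv' : IMoves κ X} {C : Set X} {b : Ix κ} {iy : Ix κ}
    (h : ∀ β, β < b → mv β = mv' β) : stepSucc S mv C b iy = stepSucc S mv' C b iy := by
  rw [stepSucc, stepSucc, VF_congr S h]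

/-! the main recursion -/

noncomputable def D (y : Ix κ → Ix κ) : Ix κ → Option (Set X × X) :=
  (wellFounded_lt (α := Ix κ)).fix (fun α rec =>
    if _hall : ∀ β (h : β < α), (rec β h).isSome then
      (if hs : ∃ m, m < α ∧ ∀ γ, γ < α → γ ≤ m then
        stepSucc S (gH S (fun β => if h : β < α then rec β h else none))
          (gC (fun β => if h : β < α then rec β h else none) hs.choose) hs.choose (y hs.choose)
      else
        if hni : (⋂ β, ⋂ (_ : β < α), gC (fun β' => if h : β' < α then rec β' h else none) β).Nonempty
        then some (⋂ β, ⋂ (_ : β < α), gC (fun β' => if h : β' < α then rec β' h else none) β,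
          hni.choose)
        else none)
    else none)

noncomputable def Cs (y : Ix κ → Ix κ) (α : Ix κ) : Set X := gC (D S y) α

noncomputable def ws (y : Ix κ → Ix κ) (α : Ix κ) : X := gW S (D S y) α

def alive (y : Ix κ → Ix κ) (α : Ix κ) : Prop := (D S y α).isSome

noncomputable def Hy (y : Ix κ → Ix κ) : IMoves κ X := gH S (D S y)

lemma D_eq (y : Ix κ → Ix κ) (α : Ix κ) : D S y α =
    if _hall : ∀ β (_ : β < α), (D S y β).isSome then
      (if hs : ∃ m, m < α ∧ ∀ γ, γ < α → γ ≤ m then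
        stepSucc S (gH S (fun β => if _h : β < α then D S y β else none))
          (gC (fun β => if _h : β < α then D S y β else none) hs.choose) hs.choose (y hs.choose)
      else
        if hni : (⋂ β, ⋂ (_ : β < α), gC (fun β' => if _h : β' < α then D S y β' else none) β).Nonempty
        then some (⋂ β, ⋂ (_ : β < α), gC (fun β' => if _h : β' < α then D S y β' else none) β,
          hni.choose)
        else none)
    else none := by
  conv_lhs => rw [D, WellFounded.fix_eq]
  rfl

lemma gC_res {y : Ix κ → Ix κ} {α β : Ix κ} (h : β < α) :
    gC (fun β' => if _h : β' < α then D S y β' else none) β = Cs S y β := by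
  rw [gC, Cs, gC, dif_pos h]

lemma gH_res {y : Ix κ → Ix κ} {α β b : Ix κ} (hβ : β < b) (hb : b < α) :
    gH S (fun β' => if _h : β' < α then D S y β' else none) β = Hy S y β := by
  have h1 : β < α := lt_trans hβ hb
  have h2 : ssuc S β < α := lt_of_le_of_lt (ssuc_le_of_lt S hβ) hb
  rw [gH, Hy, gH, gC, gW, dif_pos h1, dif_pos h2]
  rfl

lemma D_dead {y : Ix κ → Ix κ} {α : Ix κ} (h : ¬ ∀ β, β < α → alive S y β) :
    D S y α = none := by
  rw [D_eq]
  rw [dif_neg]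
  intro hall
  exact h (fun β hβ => hall β hβ)

lemma alive_below {y : Ix κ → Ix κ} {α : Ix κ} (h : alive S y α) :
    ∀ β, β < α → alive S y β := by
  by_contra hc
  rw [alive, D_dead S hc] at h
  simp at h

lemma hs_choose_eq {α m : Ix κ} (hs : ∃ m', m' < α ∧ ∀ γ, γ < α → γ ≤ m')
    (h1 : m < α) (h2 : ∀ γ, γ < α → γ ≤ m) : hs.choose = m :=
  le_antisymm (h2 _ hs.choose_spec.1) (hs.choose_spec.2 m h1)

/-- unfolding at a successor. -/
lemma D_succ (y : Ix κ → Ix κ) (b : Ix κ) (hall : ∀ β, β < ssuc S b → alive S y β) :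
    D S y (ssuc S b) = stepSucc S (Hy S y) (Cs S y b) b (y b) := by
  have hmax1 : b < ssuc S b := lt_ssuc S b
  have hmax2 : ∀ γ, γ < ssuc S b → γ ≤ b := fun γ h => (lt_ssuc_iff S).mp h
  have hs : ∃ m, m < ssuc S b ∧ ∀ γ, γ < ssuc S b → γ ≤ m := ⟨b, hmax1, hmax2⟩
  have hall' : ∀ β (_ : β < ssuc S b), (D S y β).isSome = true := hall
  rw [D_eq, dif_pos hall', dif_pos hs]
  have hch : hs.choose = b := hs_choose_eq hs hmax1 hmax2
  rw [hch, gC_res S hmax1]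
  exact stepSucc_congr S (fun β hβ => gH_res S hβ hmax1)

/-- unfolding at a limit (or minimal) level. -/
lemma D_limit (y : Ix κ → Ix κ) (α : Ix κ) (hall : ∀ β, β < α → alive S y β)
    (hs : ¬ ∃ m, m < α ∧ ∀ γ, γ < α → γ ≤ m) :
    D S y α = if hni : (⋂ β, ⋂ (_ : β < α), Cs S y β).Nonempty
      then some (⋂ β, ⋂ (_ : β < α), Cs S y β, hni.choose) else none := by
  have hall' : ∀ β (_ : β < α), (D S y β).isSome = true := hall
  rw [D_eq, dif_pos hall', dif_neg hs]
  have heq : (⋂ β, ⋂ (_ : β < α), gC (fun β' => if _h : β' < α then D S y β' else none) β)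
      = ⋂ β, ⋂ (_ : β < α), Cs S y β := by
    ext u
    simp only [Set.mem_iInter]
    constructor
    · intro h β hβ
      rw [← gC_res S hβ]
      exact h β hβ
    · intro h β hβ
      rw [gC_res S hβ]
      exact h β hβ
  rw [heq]

/-- dependence only on `y` below `α`. -/
lemma D_dep : ∀ (α : Ix κ) (y y' : Ix κ → Ix κ), (∀ β, β < α → y β = y' β) →
    D S y α = D S y' α := by
  intro α
  induction α using WellFounded.induction (wellFounded_lt (α := Ix κ)) with
  | _ α IH =>
  intro y y' hyy
  have hDb : ∀ β, β < α → D S y β = D S y' β := fun β hβ =>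
    IH β hβ y y' (fun γ hγ => hyy γ (lt_trans hγ hβ))
  rw [D_eq, D_eq (y := y')]
  have h1 : (∀ β (_ : β < α), (D S y β).isSome) ↔ (∀ β (_ : β < α), (D S y' β).isSome) := by
    constructor <;> intro h β hβ
    · rw [← hDb β hβ]; exact h β hβ
    · rw [hDb β hβ]; exact h β hβ
  have hg : (fun β => if _h : β < α then D S y β else none)
      = (fun β => if _h : β < α then D S y' β else none) := by
    funext β
    by_cases hβ : β < α
    · rw [dif_pos hβ, dif_pos hβ, hDb β hβ]
    · rw [dif_neg hβ, dif_neg hβ]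
  by_cases hall : ∀ β (_ : β < α), (D S y β).isSome
  · rw [dif_pos hall, dif_pos (h1.mp hall)]
    by_cases hs : ∃ m, m < α ∧ ∀ γ, γ < α → γ ≤ m
    · rw [dif_pos hs, dif_pos hs, hg, hyy hs.choose hs.choose_spec.1]
    · rw [dif_neg hs, dif_neg hs, hg]
  · rw [dif_neg hall, dif_neg (fun hc => hall (h1.mpr hc))]

lemma Cs_dep {α : Ix κ} {y y' : Ix κ → Ix κ} (h : ∀ β, β < α → y β = y' β) :
    Cs S y α = Cs S y' α := by rw [Cs, Cs, gC, gC, D_dep S α y y' h]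

lemma alive_dep {α : Ix κ} {y y' : Ix κ → Ix κ} (h : ∀ β, β < α → y β = y' β) :
    alive S y α ↔ alive S y' α := by rw [alive, alive, D_dep S α y y' h]

lemma Hy_dep {b : Ix κ} {y y' : Ix κ → Ix κ} (h : ∀ β, β < b → y β = y' β) :
    ∀ β, β < b → Hy S y β = Hy S y' β := by
  intro β hβ
  have h1 : D S y β = D S y' β := D_dep S β y y' (fun γ hγ => h γ (lt_trans hγ hβ))
  have h2 : D S y (ssuc S β) = D S y' (ssuc S β) :=
    D_dep S (ssuc S β) y y' (fun γ hγ => h γ (lt_of_lt_of_le hγ (ssuc_le_of_lt S hβ)))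
  rw [Hy, Hy, gH, gH, gC, gC, gW, gW, h1, h2]

end Construction
section Claims

attribute [local instance] Classical.propDecidable

variable {κ : Cardinal.{u}} {X : Type u} [TopologicalSpace X] (S : Setup κ X)
variable {C : Set X} {b : Ix κ} {Vf : X → Set X}

lemma lvl_spec (hgood : ∀ x ∈ C, ∃ c, b < c ∧ atm S.W c x ∩ C ⊆ Vf x) {x : X} (hx : x ∈ C) :
    b < lvlV S C b x (Vf x) ∧ atm S.W (lvlV S C b x (Vf x)) x ∩ C ⊆ Vf x := by
  have h := hgood x hx
  rw [lvlV, dif_pos h]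
  exact h.choose_spec

lemma mem_PV {x : X} (hx : x ∈ C) : x ∈ PV S C b x (Vf x) := ⟨mem_atm_self _ _, hx⟩

lemma PV_subset (hgood : ∀ x ∈ C, ∃ c, b < c ∧ atm S.W c x ∩ C ⊆ Vf x) {x : X}
    (hx : x ∈ C) : PV S C b x (Vf x) ⊆ Vf x := (lvl_spec S hgood hx).2

lemma dSet_ne {x : X} (hx : x ∈ C) : (dSetV S C b Vf x).Nonempty :=
  ⟨lvlV S C b x (Vf x), x, hx, rfl, mem_PV S hx⟩

lemma dV_spec {x : X} (hx : x ∈ C) :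
    ∃ x' ∈ C, lvlV S C b x' (Vf x') = dV S C b Vf x ∧ x ∈ PV S C b x' (Vf x') := by
  have h := (wellFounded_lt).min_mem _ (dSet_ne S (b := b) (Vf := Vf) hx)
  rw [dV, dif_pos (dSet_ne S (b := b) (Vf := Vf) hx)]
  exact h

lemma dV_min {x : X} (hx : x ∈ C) {c : Ix κ} (hc : c ∈ dSetV S C b Vf x) :
    dV S C b Vf x ≤ c := by
  rw [dV, dif_pos (dSet_ne S (b := b) (Vf := Vf) hx)]
  by_contra h
  push_neg at h
  exact (wellFounded_lt).not_lt_min _ hc h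

lemma dV_gt (hgood : ∀ x ∈ C, ∃ c, b < c ∧ atm S.W c x ∩ C ⊆ Vf x) {x : X} (hx : x ∈ C) :
    b < dV S C b Vf x := by
  obtain ⟨x', hx', heq, _⟩ := dV_spec S (Vf := Vf) hx
  rw [← heq]
  exact (lvl_spec S hgood hx').1

lemma mem_QV {x : X} (hx : x ∈ C) : x ∈ QV S C b Vf x := ⟨mem_atm_self _ _, hx⟩

lemma QV_subset {x : X} : QV S C b Vf x ⊆ C := fun _ hu => hu.2

lemma QV_eq_of_mem {x u : X} (hx : x ∈ C) (hu : u ∈ QV S C b Vf x) :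
    dV S C b Vf u = dV S C b Vf x ∧ QV S C b Vf u = QV S C b Vf x := by
  obtain ⟨huatm, huC⟩ := hu
  have hle : dV S C b Vf u ≤ dV S C b Vf x := by
    obtain ⟨x', hx', heq, hxP⟩ := dV_spec S (Vf := Vf) hx
    apply dV_min S huC
    refine ⟨x', hx', heq, ?_, huC⟩
    have h1 : x ∈ atm S.W (dV S C b Vf x) x' := by rw [← heq]; exact hxP.1
    show u ∈ atm S.W (lvlV S C b x' (Vf x')) x'
    rw [heq, ← atm_eq_of_mem h1]
    exact huatm
  have hge : dV S C b Vf x ≤ dV S C b Vf u := by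
    obtain ⟨u', hu', hequ, huP⟩ := dV_spec S (Vf := Vf) huC
    apply dV_min S hx
    refine ⟨u', hu', hequ, ?_, hx⟩
    have h2 : x ∈ atm S.W (dV S C b Vf u) u := by
      apply atm_symm
      exact atm_mono hle x huatm
    have h3 : u ∈ atm S.W (dV S C b Vf u) u' := by rw [← hequ]; exact huP.1
    show x ∈ atm S.W (lvlV S C b u' (Vf u')) u'
    rw [hequ, ← atm_eq_of_mem h3]
    exact h2
  have hdeq : dV S C b Vf u = dV S C b Vf x := le_antisymm hle hge
  refine ⟨hdeq, ?_⟩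
  rw [QV, QV, hdeq, atm_eq_of_mem huatm]

lemma QV_witness {x : X} (hx : x ∈ C) :
    ∃ x' ∈ C, PV S C b x' (Vf x') = QV S C b Vf x := by
  obtain ⟨x', hx', heq, hxP⟩ := dV_spec S (Vf := Vf) hx
  refine ⟨x', hx', ?_⟩
  have h1 : x ∈ atm S.W (dV S C b Vf x) x' := by rw [← heq]; exact hxP.1
  rw [PV, QV, heq, atm_eq_of_mem h1]

lemma Pieces_small : Nonempty (↥(PiecesV S C b Vf) ↪ Ix κ) := by
  apply emb_of_small
  have hwit : ∀ p : ↥(PiecesV S C b Vf), ∃ x, x ∈ C ∧ (p : Set X) = QV S C b Vf x :=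
    fun p => p.2
  set xw : ↥(PiecesV S C b Vf) → X := fun p : ↥(PiecesV S C b Vf) => (hwit p).choose with hxw
  have hxwQ : ∀ p : ↥(PiecesV S C b Vf), (p : Set X) = QV S C b Vf (xw p) :=
    fun p => (hwit p).choose_spec.2
  set code : ↥(PiecesV S C b Vf) → Σ c : Ix κ, ({a : Ix κ // a < c} → Bool) :=
    fun p : ↥(PiecesV S C b Vf) =>
      ⟨dV S C b Vf (xw p), fun a => decide (xw p ∈ S.W a.1)⟩ with hcode
  have hinj : Function.Injective code := by
    intro p q hpq
    obtain ⟨h1, h2⟩ := Sigma.mk.inj_iff.mp hpq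
    rw [← h1] at h2
    have hfg := eq_of_heq h2
    have hpat : ∀ a : Ix κ, a < dV S C b Vf (xw p) → (xw p ∈ S.W a ↔ xw q ∈ S.W a) := by
      intro a ha
      have := congr_fun hfg ⟨a, ha⟩
      simpa using this
    have hatm : atm S.W (dV S C b Vf (xw p)) (xw p) = atm S.W (dV S C b Vf (xw p)) (xw q) := by
      ext u
      constructor
      · intro hu a ha
        exact (hu a ha).trans (hpat a ha)
      · intro hu a ha
        exact (hu a ha).trans (hpat a ha).symm
    apply Subtype.ext
    rw [hxwQ p, hxwQ q]
    show atm S.W (dV S C b Vf (xw p)) (xw p) ∩ C = atm S.W (dV S C b Vf (xw q)) (xw q) ∩ C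
    rw [← h1, hatm]
  exact le_trans (Cardinal.mk_le_of_injective hinj) (mk_patterns S.hreg S.hunc S.hpow)

lemma stepSuccV_some {x : X} (hx : x ∈ C) :
    ∃ w, stepSuccV S C b Vf (idxV S C b Vf x) = some (QV S C b Vf x, w) ∧
      w ∈ C ∧ PV S C b w (Vf w) = QV S C b Vf x := by
  have hQmem : QV S C b Vf x ∈ PiecesV S C b Vf := ⟨x, hx, rfl⟩
  have hp : ∃ p ∈ PiecesV S C b Vf, embOf S (PiecesV S C b Vf) p = idxV S C b Vf x :=
    ⟨QV S C b Vf x, hQmem, rfl⟩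
  have hpc : hp.choose = QV S C b Vf x :=
    embOf_inj S (Pieces_small S) hp.choose_spec.1 hQmem hp.choose_spec.2
  rw [stepSuccV, dif_pos hp]
  have hw : ∃ x', x' ∈ C ∧ PV S C b x' (Vf x') = hp.choose := by
    rw [hpc]
    obtain ⟨x', hx', h⟩ := QV_witness S (Vf := Vf) hx
    exact ⟨x', hx', h⟩
  rw [dif_pos hw]
  refine ⟨hw.choose, ?_, hw.choose_spec.1, by rw [hw.choose_spec.2, hpc]⟩
  exact congrArg (fun s => some (s, hw.choose)) hpc

lemma stepSuccV_inv {iy : Ix κ} {p : Set X} {w : X}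
    (h : stepSuccV S C b Vf iy = some (p, w)) :
    (∃ x₁ ∈ C, p = QV S C b Vf x₁) ∧ w ∈ C ∧ PV S C b w (Vf w) = p ∧
      embOf S (PiecesV S C b Vf) p = iy := by
  rw [stepSuccV] at h
  by_cases hp : ∃ q ∈ PiecesV S C b Vf, embOf S (PiecesV S C b Vf) q = iy
  · rw [dif_pos hp] at h
    by_cases hw : ∃ x', x' ∈ C ∧ PV S C b x' (Vf x') = hp.choose
    · rw [dif_pos hw] at h
      have h1 : hp.choose = p := congr_arg Prod.fst (Option.some_injective _ h)
      have h2 : hw.choose = w := congr_arg Prod.snd (Option.some_injective _ h)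
      obtain ⟨x₁, hx₁, hq⟩ := hp.choose_spec.1
      refine ⟨⟨x₁, hx₁, by rw [← h1, hq]⟩, ?_, ?_, ?_⟩
      · rw [← h2]; exact hw.choose_spec.1
      · rw [← h2, hw.choose_spec.2, h1]
      · rw [← h1]; exact hp.choose_spec.2
    · rw [dif_neg hw] at h
      exact absurd h (by simp)
  · rw [dif_neg hp] at h
    exact absurd h (by simp)

end Claims
section Invariants

attribute [local instance] Classical.propDecidable

variable {κ : Cardinal.{u}} {X : Type u} [TopologicalSpace X] (S : Setup κ X)

lemma interBelow_congr {σ : Strategy κ X} (hstrat : IsIIStrategy σ) {f g : IMoves κ X}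
    {a : Ix κ} (h : ∀ c, c < a → f c = g c) :
    InterBelow (σ f) a = InterBelow (σ g) a := by
  have hσ : ∀ c, c < a → σ f c = σ g c := fun c hc =>
    hstrat f g c (fun b hb => h b (lt_of_le_of_lt hb hc))
  rw [InterBelow, InterBelow]
  ext u
  simp only [Set.mem_iInter]
  constructor <;> intro hu c hc
  · rw [← hσ c hc]; exact hu c hc
  · rw [hσ c hc]; exact hu c hc

lemma legal_congr {σ : Strategy κ X} (hstrat : IsIIStrategy σ) {f g : IMoves κ X}
    {a : Ix κ} (h : ∀ c, c ≤ a → f c = g c) :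
    (LegalI σ f a ↔ LegalI σ g a) ∧ (LegalII σ f a ↔ LegalII σ g a) := by
  have hIB : InterBelow (σ f) a = InterBelow (σ g) a :=
    interBelow_congr hstrat (fun c hc => h c hc.le)
  have hfa : f a = g a := h a le_rfl
  have hσa : σ f a = σ g a := hstrat f g a (fun b hb => h b hb)
  rw [LegalI, LegalI, LegalII, LegalII, hIB, hfa, hσa]
  exact ⟨Iff.rfl, Iff.rfl⟩

/-- I's play of `(C, x)` at round `b` on top of the canonical run along `y`. -/
noncomputable def fy (y : Ix κ → Ix κ) (b : Ix κ) (x : X) : IMoves κ X :=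
  fun β => if β < b then Hy S y β else (Cs S y b, x)

lemma VF_eq_fy (y : Ix κ → Ix κ) (b : Ix κ) (x : X) :
    VF S (Hy S y) (Cs S y b) b x = S.σ (fy S y b x) b := rfl

/-- the response function at stage `b` along `y`. -/
noncomputable def VfY (y : Ix κ → Ix κ) (b : Ix κ) : X → Set X :=
  VF S (Hy S y) (Cs S y b) b

noncomputable def QY (y : Ix κ → Ix κ) (b : Ix κ) (x : X) : Set X :=
  QV S (Cs S y b) b (VfY S y b) x

noncomputable def idxY (y : Ix κ → Ix κ) (b : Ix κ) (x : X) : Ix κ :=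
  idxV S (Cs S y b) b (VfY S y b) x

/-- the invariants carried up the construction. -/
structure Inv (y : Ix κ → Ix κ) (α : Ix κ) : Prop where
  ne : (Cs S y α).Nonempty
  wmem : ws S y α ∈ Cs S y α
  clop : IsClopen (Cs S y α)
  sub : ∀ β, β < α → Cs S y α ⊆ Cs S y β
  subV : ∀ β, β < α → Cs S y α ⊆ S.σ (Hy S y) β
  leg : ∀ β, β < α → LegalI S.σ (Hy S y) β ∧ LegalII S.σ (Hy S y) β
  shr : ∀ b, b < α → ∃ c, b < c ∧ ∀ x ∈ Cs S y α, Cs S y α ⊆ atm S.W c x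

section WithHyps

variable (hstrat : IsIIStrategy S.σ)
variable (hresp : ∀ f a, LegalBelow S.σ f a → LegalI S.σ f a → LegalII S.σ f a)
variable (hWcl : ∀ i, IsClopen (S.W i))
variable (hWb : ∀ (x : X) (U : Set X), x ∈ U → IsOpen U → ∃ i, x ∈ S.W i ∧ S.W i ⊆ U)
variable (hadd : KAdditive κ X)

lemma CsubIB {y : Ix κ → Ix κ} {b : Ix κ} (hinv : Inv S y b) :
    Cs S y b ⊆ InterBelow (S.σ (Hy S y)) b := by
  intro u hu
  rw [InterBelow]
  simp only [Set.mem_iInter]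
  intro β hβ
  exact hinv.subV β hβ hu

include hstrat hresp hWb in
lemma round_legal {y : Ix κ → Ix κ} {b : Ix κ} (hinv : Inv S y b) {x : X}
    (hx : x ∈ Cs S y b) :
    LegalBelow S.σ (fy S y b x) b ∧ LegalI S.σ (fy S y b x) b ∧
      LegalII S.σ (fy S y b x) b ∧
      (∃ c, b < c ∧ atm S.W c x ∩ Cs S y b ⊆ S.σ (fy S y b x) b) := by
  have hagree : ∀ β, β < b → ∀ c, c ≤ β → fy S y b x c = Hy S y c := by
    intro β hβ c hc
    rw [fy, if_pos (lt_of_le_of_lt hc hβ)]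
  have hbelow : LegalBelow S.σ (fy S y b x) b := by
    intro β hβ
    have h := legal_congr hstrat (σ := S.σ) (hagree β hβ)
    exact ⟨h.1.mpr (hinv.leg β hβ).1, h.2.mpr (hinv.leg β hβ).2⟩
  have hIB : InterBelow (S.σ (fy S y b x)) b = InterBelow (S.σ (Hy S y)) b :=
    interBelow_congr hstrat (fun c hc => by rw [fy, if_pos hc])
  have hI : LegalI S.σ (fy S y b x) b := by
    constructor
    · show RelOpenIn (InterBelow (S.σ (fy S y b x)) b) (fy S y b x b).1
      have hfb : (fy S y b x b) = (Cs S y b, x) := by rw [fy, if_neg (lt_irrefl b)]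
      rw [hfb, hIB]
      refine ⟨Cs S y b, hinv.clop.isOpen, ?_⟩
      apply Set.Subset.antisymm
      · intro u hu
        exact ⟨hu, CsubIB S hinv hu⟩
      · intro u hu
        exact hu.1
    · have hfb : (fy S y b x b) = (Cs S y b, x) := by rw [fy, if_neg (lt_irrefl b)]
      rw [hfb]
      exact hx
  have hII : LegalII S.σ (fy S y b x) b := hresp _ b hbelow hI
  refine ⟨hbelow, hI, hII, ?_⟩
  have hfb : fy S y b x b = (Cs S y b, x) := by rw [fy, if_neg (lt_irrefl b)]
  obtain ⟨⟨Wo, hWo, hVeq⟩, hxV, hVsub⟩ := hII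
  rw [hfb] at hxV
  have hxWo : x ∈ Wo := by
    have : x ∈ S.σ (fy S y b x) b := hxV
    rw [hVeq] at this
    exact this.1
  obtain ⟨c, hc, hsub⟩ := atm_nbhd S.hreg S.hunc hWb hxWo hWo b
  refine ⟨c, hc, ?_⟩
  intro u hu
  rw [hVeq]
  exact ⟨hsub hu.1, hIB ▸ CsubIB S hinv hu.2⟩

include hstrat hresp hWb in
lemma hgoodY {y : Ix κ → Ix κ} {b : Ix κ} (hinv : Inv S y b) :
    ∀ x ∈ Cs S y b, ∃ c, b < c ∧ atm S.W c x ∩ Cs S y b ⊆ VfY S y b x := by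
  intro x hx
  exact (round_legal S hstrat hresp hWb hinv hx).2.2.2

include hstrat hresp hWcl hWb hadd in
lemma inv_main : ∀ α : Ix κ, ∀ y, alive S y α → Inv S y α := by
  intro α
  induction α using WellFounded.induction (wellFounded_lt (α := Ix κ)) with
  | _ α IH =>
  intro y halive
  have hall : ∀ β, β < α → alive S y β := alive_below S halive
  by_cases hs : ∃ m, m < α ∧ ∀ γ, γ < α → γ ≤ m
  · -- successor case
    obtain ⟨b, hb1, hb2⟩ := hs
    have hαb : α = ssuc S b := eq_suc_of_max_below S.hreg S.hunc hb1 hb2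
    subst hαb
    have hbinv : Inv S y b := IH b hb1 y (hall b hb1)
    have hgood := hgoodY S hstrat hresp hWb hbinv
    have hDs : D S y (ssuc S b) = stepSucc S (Hy S y) (Cs S y b) b (y b) := D_succ S y b hall
    obtain ⟨⟨p, w⟩, hpwD⟩ := Option.isSome_iff_exists.mp halive
    have hpwS : stepSuccV S (Cs S y b) b (VfY S y b) (y b) = some (p, w) := by
      have h' : stepSucc S (Hy S y) (Cs S y b) b (y b) = some (p, w) := by
        rw [← hDs]; exact hpwD
      exact h' 
    obtain ⟨⟨x₁, hx₁, hpQ⟩, hwC, hwPV, hemb⟩ := stepSuccV_inv S hpwS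
    have hCs : Cs S y (ssuc S b) = p := by rw [Cs, gC, hpwD]; rfl
    have hws : ws S y (ssuc S b) = w := by rw [ws, gW, hpwD]; rfl
    -- the set p is the piece QY y b x₁
    have hQsubC : p ⊆ Cs S y b := by rw [hpQ]; exact QV_subset S
    -- p ⊆ the response to (C, w)
    have hfyw : S.σ (fy S y b w) b = S.σ (Hy S y) b := by
      apply hstrat
      intro c hc
      rcases lt_or_eq_of_le hc with h | h
      · rw [fy, if_pos h]
      · subst h
        rw [fy, if_neg (lt_irrefl c)]
        have : Hy S y c = (Cs S y c, ws S y (ssuc S c)) := rfl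
        rw [this, hws]
    have hpsubV : p ⊆ S.σ (Hy S y) b := by
      rw [← hfyw, ← VF_eq_fy]
      intro u hu
      apply PV_subset S hgood hwC
      rw [hwPV]
      exact hu
    -- legality of round b along y
    have hlegb : LegalI S.σ (Hy S y) b ∧ LegalII S.σ (Hy S y) b := by
      have hrl := round_legal S hstrat hresp hWb hbinv hwC
      have hagree : ∀ c, c ≤ b → fy S y b w c = Hy S y c := by
        intro c hc
        rcases lt_or_eq_of_le hc with h | h
        · rw [fy, if_pos h]
        · subst h
          rw [fy, if_neg (lt_irrefl c)]
          have : Hy S y c = (Cs S y c, ws S y (ssuc S c)) := rfl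
          rw [this, hws]
      have h := legal_congr hstrat (σ := S.σ) hagree
      exact ⟨h.1.mp hrl.2.1, h.2.mp hrl.2.2.1⟩
    constructor
    · -- ne
      rw [hCs, hpQ]
      exact ⟨x₁, mem_QV S hx₁⟩
    · -- wmem
      rw [hCs, hws, ← hwPV]
      exact mem_PV S hwC
    · -- clop
      rw [hCs, hpQ, QV]
      exact (atm_clopen hadd hWcl _ _).inter hbinv.clop
    · -- sub
      intro β hβ
      have hβb : β ≤ b := hb2 β hβ
      rcases lt_or_eq_of_le hβb with h | h
      · exact fun u hu => hbinv.sub β h (hQsubC (hCs ▸ hu))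
      · subst h
        exact fun u hu => hQsubC (hCs ▸ hu)
    · -- subV
      intro β hβ
      have hβb : β ≤ b := hb2 β hβ
      rcases lt_or_eq_of_le hβb with h | h
      · exact fun u hu => hbinv.subV β h (hQsubC (hCs ▸ hu))
      · subst h
        exact fun u hu => hpsubV (hCs ▸ hu)
    · -- leg
      intro β hβ
      have hβb : β ≤ b := hb2 β hβ
      rcases lt_or_eq_of_le hβb with h | h
      · exact hbinv.leg β h
      · subst h
        exact hlegb
    · -- shr
      intro b' hb'
      refine ⟨dV S (Cs S y b) b (VfY S y b) x₁, ?_, ?_⟩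
      · exact lt_of_le_of_lt (hb2 b' hb') (dV_gt S hgood hx₁)
      · intro x hxp
        rw [hCs] at hxp
        rw [hCs, hpQ]
        have hxatm : x ∈ atm S.W (dV S (Cs S y b) b (VfY S y b) x₁) x₁ := by
          rw [hpQ] at hxp
          exact hxp.1
        intro u hu
        have heqa : atm S.W (dV S (Cs S y b) b (VfY S y b) x₁) x
            = atm S.W (dV S (Cs S y b) b (VfY S y b) x₁) x₁ := atm_eq_of_mem hxatm
        rw [heqa]
        exact hu.1
  · -- limit case
    have hDl := D_limit S y α hall hs
    by_cases hni : (⋂ β, ⋂ (_ : β < α), Cs S y β).Nonempty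
    swap
    · rw [alive, hDl, dif_neg hni] at halive
      simp at halive
    rw [dif_pos hni] at hDl
    have hCs : Cs S y α = ⋂ β, ⋂ (_ : β < α), Cs S y β := by rw [Cs, gC, hDl]; rfl
    have hws : ws S y α = hni.choose := by rw [ws, gW, hDl]; rfl
    have hssuc_lt : ∀ β, β < α → ssuc S β < α := by
      intro β hβ
      rcases lt_or_eq_of_le (ssuc_le_of_lt S hβ) with h | h
      · exact h
      · exfalso
        apply hs
        exact ⟨β, hβ, fun γ hγ => (lt_ssuc_iff S).mp (h ▸ hγ)⟩
    have hsub : ∀ β, β < α → Cs S y α ⊆ Cs S y β := by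
      intro β hβ u hu
      rw [hCs] at hu
      exact Set.mem_iInter.mp (Set.mem_iInter.mp hu β) hβ
    constructor
    · rw [hCs]; exact hni
    · rw [hCs, hws]; exact hni.choose_spec
    · -- clop
      rw [hCs]
      have heq : (⋂ β, ⋂ (_ : β < α), Cs S y β) = ⋂ (q : {β : Ix κ // β < α}), Cs S y q.1 := by
        ext u
        simp only [Set.mem_iInter, Subtype.forall]
      rw [heq]
      exact kInter_clopen hadd (mk_Iio_lt α) _
        (fun q => (IH q.1 q.2 y (hall q.1 q.2)).clop)
    · exact hsub
    · intro β hβ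
      have h1 := (IH (ssuc S β) (hssuc_lt β hβ) y (hall _ (hssuc_lt β hβ))).subV β (lt_ssuc S β)
      exact fun u hu => h1 (hsub (ssuc S β) (hssuc_lt β hβ) hu)
    · intro β hβ
      exact (IH (ssuc S β) (hssuc_lt β hβ) y (hall _ (hssuc_lt β hβ))).leg β (lt_ssuc S β)
    · intro b hb
      obtain ⟨c, hc, hshr⟩ := (IH (ssuc S b) (hssuc_lt b hb) y (hall _ (hssuc_lt b hb))).shr b
        (lt_ssuc S b)
      refine ⟨c, hc, ?_⟩
      intro x hx
      have hx' : x ∈ Cs S y (ssuc S b) := hsub _ (hssuc_lt b hb) hx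
      exact fun u hu => hshr x hx' (hsub _ (hssuc_lt b hb) hu)

end WithHyps

end Invariants
section Derived

attribute [local instance] Classical.propDecidable

variable {κ : Cardinal.{u}} {X : Type u} [TopologicalSpace X] (S : Setup κ X)
variable (hstrat : IsIIStrategy S.σ)
variable (hresp : ∀ f a, LegalBelow S.σ f a → LegalI S.σ f a → LegalII S.σ f a)
variable (hWcl : ∀ i, IsClopen (S.W i))
variable (hWb : ∀ (x : X) (U : Set X), x ∈ U → IsOpen U → ∃ i, x ∈ S.W i ∧ S.W i ⊆ U)
variable (hadd : KAdditive κ X)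

lemma idxY_dep {α : Ix κ} {y y' : Ix κ → Ix κ} (h : ∀ β, β < α → y β = y' β) (x : X) :
    idxY S y α x = idxY S y' α x := by
  have hCs : Cs S y α = Cs S y' α := Cs_dep S h
  have hVf : VfY S y α = VfY S y' α := by
    rw [VfY, VfY, hCs]
    exact VF_congr S (Hy_dep S h)
  rw [idxY, idxY, idxV, idxV, hCs, hVf]

lemma QY_dep {α : Ix κ} {y y' : Ix κ → Ix κ} (h : ∀ β, β < α → y β = y' β) (x : X) :
    QY S y α x = QY S y' α x := by
  have hCs : Cs S y α = Cs S y' α := Cs_dep S h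
  have hVf : VfY S y α = VfY S y' α := by
    rw [VfY, VfY, hCs]
    exact VF_congr S (Hy_dep S h)
  rw [QY, QY, hCs, hVf]

include hstrat hresp hWcl hWb hadd

/-- every point of an alive node has an (alive) child containing it. -/
lemma child_exists {y : Ix κ → Ix κ} {b : Ix κ} (halive : alive S y b) {x : X}
    (hx : x ∈ Cs S y b) :
    ∀ y', (∀ β, β < b → y' β = y β) → y' b = idxY S y b x →
      alive S y' (ssuc S b) ∧ Cs S y' (ssuc S b) = QY S y b x := by
  intro y' hagree hy'b
  have hDeq : ∀ β, β ≤ b → D S y' β = D S y β := fun β hβ =>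
    D_dep S β y' y (fun γ hγ => hagree γ (lt_of_lt_of_le hγ hβ))
  have hall' : ∀ β, β < ssuc S b → alive S y' β := by
    intro β hβ
    have hβb : β ≤ b := (lt_ssuc_iff S).mp hβ
    show (D S y' β).isSome
    rw [hDeq β hβb]
    rcases lt_or_eq_of_le hβb with h | h
    · exact alive_below S halive β h
    · subst h; exact halive
  have hCs' : Cs S y' b = Cs S y b := by rw [Cs, Cs, gC, gC, hDeq b le_rfl]
  have hVf' : VF S (Hy S y') (Cs S y b) b = VfY S y b :=
    VF_congr S (fun β hβ => Hy_dep S (fun γ hγ => (hagree γ hγ).symm) β hβ |>.symm)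
  have hDs : D S y' (ssuc S b) = stepSucc S (Hy S y') (Cs S y' b) b (y' b) :=
    D_succ S y' b hall'
  obtain ⟨w, hsome, hwC, hwPV⟩ := stepSuccV_some S (C := Cs S y b) (b := b)
    (Vf := VfY S y b) hx
  have hDval : D S y' (ssuc S b) = some (QY S y b x, w) := by
    rw [hDs]
    have h1 : stepSucc S (Hy S y') (Cs S y' b) b (y' b)
        = stepSuccV S (Cs S y b) b (VfY S y b) (idxY S y b x) := by
      rw [stepSucc, hCs', hVf', hy'b]
    rw [h1]
    exact hsome
  constructor
  · show (D S y' (ssuc S b)).isSome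
    rw [hDval]
    rfl
  · rw [Cs, gC, hDval]
    rfl

/-- the child containing a point is unique. -/
lemma child_unique {y : Ix κ → Ix κ} {b : Ix κ} (halive : alive S y (ssuc S b)) {x : X}
    (hx : x ∈ Cs S y (ssuc S b)) : y b = idxY S y b x := by
  have hall := alive_below S halive
  have hbinv := inv_main S hstrat hresp hWcl hWb hadd b y (hall b (lt_ssuc S b))
  have hgood := hgoodY S hstrat hresp hWb hbinv
  have hDs := D_succ S y b hall
  obtain ⟨⟨p, w⟩, hpwD⟩ := Option.isSome_iff_exists.mp halive
  have hpwS : stepSuccV S (Cs S y b) b (VfY S y b) (y b) = some (p, w) := by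
    have h' : stepSucc S (Hy S y) (Cs S y b) b (y b) = some (p, w) := by
      rw [← hDs]; exact hpwD
    exact h'
  obtain ⟨⟨x₁, hx₁, hpQ⟩, hwC, hwPV, hemb⟩ := stepSuccV_inv S hpwS
  have hCs : Cs S y (ssuc S b) = p := by rw [Cs, gC, hpwD]; rfl
  have hxp : x ∈ p := hCs ▸ hx
  have hxC : x ∈ Cs S y b := by
    rw [hpQ] at hxp
    exact QV_subset S hxp
  have hQeq : QV S (Cs S y b) b (VfY S y b) x = QV S (Cs S y b) b (VfY S y b) x₁ :=
    (QV_eq_of_mem S hx₁ (hpQ ▸ hxp)).2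
  rw [idxY, idxV, hQeq, ← hpQ, hemb]

/-- the canonical branch of a point. -/
noncomputable def brr (x : X) : Ix κ → Ix κ :=
  (wellFounded_lt (α := Ix κ)).fix (fun α rec =>
    idxY S (fun β => if h : β < α then rec β h else jnk S) α x)

omit hstrat hresp hWcl hWb hadd in
lemma brr_eq (x : X) (α : Ix κ) :
    brr S x α = idxY S (fun β => if _h : β < α then brr S x β else jnk S) α x := by
  conv_lhs => rw [brr, WellFounded.fix_eq]
  rfl

omit hstrat hresp hWcl hWb hadd in
lemma brr_eq' (x : X) (α : Ix κ) : brr S x α = idxY S (brr S x) α x := by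
  rw [brr_eq]
  exact idxY_dep S (fun β hβ => by rw [dif_pos hβ]) x

/-- the branch map into the generalized Baire space. -/
noncomputable def brf (x : X) : GenBaire κ := brr S x

omit hstrat hresp hWcl hWb hadd in
lemma brf_def (x : X) : brf S x = brr S x := rfl

lemma brr_mem : ∀ (α : Ix κ) (x : X), alive S (brr S x) α ∧ x ∈ Cs S (brr S x) α := by
  intro α
  induction α using WellFounded.induction (wellFounded_lt (α := Ix κ)) with
  | _ α IH =>
  intro x
  by_cases hs : ∃ m, m < α ∧ ∀ γ, γ < α → γ ≤ m
  · obtain ⟨b, hb1, hb2⟩ := hs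
    have hαb : α = ssuc S b := eq_suc_of_max_below S.hreg S.hunc hb1 hb2
    subst hαb
    obtain ⟨hb_alive, hb_mem⟩ := IH b hb1 x
    have hch := child_exists S hstrat hresp hWcl hWb hadd hb_alive hb_mem
      (brr S x) (fun _ _ => rfl) (brr_eq' S x b)
    refine ⟨hch.1, ?_⟩
    rw [hch.2]
    exact mem_QV S hb_mem
  · have hall : ∀ β, β < α → alive S (brr S x) β := fun β hβ => (IH β hβ x).1
    have hDl := D_limit S (brr S x) α hall hs
    have hni : (⋂ β, ⋂ (_ : β < α), Cs S (brr S x) β).Nonempty := by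
      refine ⟨x, ?_⟩
      simp only [Set.mem_iInter]
      exact fun β hβ => (IH β hβ x).2
    rw [dif_pos hni] at hDl
    constructor
    · show (D S (brr S x) α).isSome
      rw [hDl]; rfl
    · rw [Cs, gC, hDl]
      show x ∈ ⋂ β, ⋂ (_ : β < α), Cs S (brr S x) β
      simp only [Set.mem_iInter]
      exact fun β hβ => (IH β hβ x).2

lemma brr_agree {x x'' : X} {α : Ix κ} (h : x'' ∈ Cs S (brr S x) α) :
    ∀ β, β < α → brr S x'' β = brr S x β := by
  intro β
  induction β using WellFounded.induction (wellFounded_lt (α := Ix κ)) with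
  | _ β IH =>
  intro hβ
  have hag : ∀ γ, γ < β → brr S x'' γ = brr S x γ := fun γ hγ => IH γ hγ (lt_trans hγ hβ)
  have hsb : ssuc S β ≤ α := ssuc_le_of_lt S hβ
  have halive_α : alive S (brr S x) α := (brr_mem S hstrat hresp hWcl hWb hadd α x).1
  have hinvα := inv_main S hstrat hresp hWcl hWb hadd α (brr S x) halive_α
  have hx''s : x'' ∈ Cs S (brr S x) (ssuc S β) := by
    rcases lt_or_eq_of_le hsb with hlt | heqq
    · exact hinvα.sub _ hlt h
    · rw [heqq]; exact h
  have halive_sb : alive S (brr S x) (ssuc S β) :=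
    (brr_mem S hstrat hresp hWcl hWb hadd (ssuc S β) x).1
  have h1 : brr S x β = idxY S (brr S x) β x'' :=
    child_unique S hstrat hresp hWcl hWb hadd halive_sb hx''s
  have h2 : brr S x'' β = idxY S (brr S x'') β x'' := brr_eq' S x'' β
  rw [h1, h2]
  exact idxY_dep S hag x''

lemma full_legal {y : Ix κ → Ix κ} (hall : ∀ α, alive S y α) (a : Ix κ) :
    LegalI S.σ (Hy S y) a ∧ LegalII S.σ (Hy S y) a :=
  (inv_main S hstrat hresp hWcl hWb hadd (ssuc S a) y (hall _)).leg a (lt_ssuc S a)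

lemma final_point (hfair : WinningFair S.σ) {y : Ix κ → Ix κ} (hall : ∀ α, alive S y α) :
    ∃ z, ∀ a, z ∈ Cs S y a := by
  have hleg : ∀ a, LegalI S.σ (Hy S y) a ∧ LegalII S.σ (Hy S y) a :=
    full_legal S hstrat hresp hWcl hWb hadd hall
  rcases hfair.2.2 (Hy S y) hleg with ⟨a, _hlim, hempty⟩ | ⟨z, hz⟩
  · exfalso
    have hinv := inv_main S hstrat hresp hWcl hWb hadd a y (hall a)
    obtain ⟨u, hu⟩ := hinv.ne
    have : u ∈ InterBelow (S.σ (Hy S y)) a := CsubIB S hinv hu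
    rw [hempty] at this
    exact this
  · refine ⟨z, fun a => ?_⟩
    have h1 : z ∈ S.σ (Hy S y) a := Set.mem_iInter.mp hz a
    exact (hleg a).2.2.2 h1

lemma br_of_point {y : Ix κ → Ix κ} (hall : ∀ α, alive S y α) {z : X}
    (hz : ∀ a, z ∈ Cs S y a) : brr S z = y := by
  suffices h : ∀ a, brr S z a = y a from funext h
  intro a
  induction a using WellFounded.induction (wellFounded_lt (α := Ix κ)) with
  | _ a IH =>
  have h1 : y a = idxY S y a z :=
    child_unique S hstrat hresp hWcl hWb hadd (hall (ssuc S a)) (hz (ssuc S a))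
  have h2 : brr S z a = idxY S (brr S z) a z := brr_eq' S z a
  rw [h1, h2]
  exact idxY_dep S IH z

omit hstrat hresp hWcl hWb hadd in
lemma isOpen_cyl (a : Ix κ) (y : GenBaire κ) :
    IsOpen {z : GenBaire κ | ∀ b, b < a → z b = y b} := by
  show TopologicalSpace.GenerateOpen _ {z : GenBaire κ | ∀ b, b < a → z b = y b}
  exact TopologicalSpace.GenerateOpen.basic _ ⟨a, y, rfl⟩

/-- the image of the branch map is closed. -/
lemma range_closed (hfair : WinningFair S.σ) :
    IsClosed (Set.range (brf S)) := by
  rw [← isOpen_compl_iff]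
  have heq : (Set.range (brf S))ᶜ
      = ⋃ (q : {q : Ix κ × GenBaire κ // ¬ alive S q.2 q.1}),
          {z : GenBaire κ | ∀ b, b < q.1.1 → z b = q.1.2 b} := by
    ext y
    simp only [Set.mem_compl_iff, Set.mem_range, Set.mem_iUnion, not_exists]
    constructor
    · intro hy
      by_cases hall : ∀ α, alive S y α
      · exfalso
        obtain ⟨z, hz⟩ := final_point S hstrat hresp hWcl hWb hadd hfair hall
        exact hy z (br_of_point S hstrat hresp hWcl hWb hadd hall hz)
      · push_neg at hall
        obtain ⟨α, hα⟩ := hall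
        exact ⟨⟨(α, y), hα⟩, fun b _ => rfl⟩
    · rintro ⟨⟨⟨a, y₀⟩, hdead⟩, hY⟩ x hx
      apply hdead
      show alive S y₀ a
      have hY' : ∀ b, b < a → y b = y₀ b := hY
      have hag : ∀ β, β < a → brr S x β = y₀ β := by
        intro β hβ
        have hxy : brr S x β = y β := congr_fun hx β
        rw [hxy, hY' β hβ]
      have halive := (brr_mem S hstrat hresp hWcl hWb hadd a x).1
      show (D S y₀ a).isSome
      rw [← D_dep S a (brr S x) y₀ hag]
      exact halive
  rw [heq]
  exact isOpen_iUnion (fun q => isOpen_cyl q.1.1 q.1.2)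

lemma brr_continuous : Continuous (brf S) := by
  apply continuous_generateFrom_iff.mpr
  rintro s ⟨a, y₀, rfl⟩
  rw [isOpen_iff_forall_mem_open]
  intro x hx
  replace hx : ∀ b < a, brf S x b = y₀ b := hx
  refine ⟨Cs S (brr S x) a, ?_, ?_, ?_⟩
  · intro x'' hx''
    show ∀ b < a, brf S x'' b = y₀ b
    intro b hb
    show brr S x'' b = y₀ b
    rw [brr_agree S hstrat hresp hWcl hWb hadd hx'' b hb]
    exact hx b hb
  · exact (inv_main S hstrat hresp hWcl hWb hadd a (brr S x)
      (brr_mem S hstrat hresp hWcl hWb hadd a x).1).clop.isOpen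
  · exact (brr_mem S hstrat hresp hWcl hWb hadd a x).2

lemma brr_injective [T2Space X] : Function.Injective (brf S) := by
  intro x x' heq
  have heq' : brr S x = brr S x' := heq
  have hmem : ∀ α, x' ∈ Cs S (brr S x) α := by
    intro α
    have h := (brr_mem S hstrat hresp hWcl hWb hadd α x').2
    rwa [← heq'] at h
  symm
  apply atm_sep S.hreg S.hunc hWb
  intro b
  obtain ⟨c, hc, hshr⟩ := (inv_main S hstrat hresp hWcl hWb hadd (ssuc S b) (brr S x)
    (brr_mem S hstrat hresp hWcl hWb hadd (ssuc S b) x).1).shr b (lt_ssuc S b)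
  have h1 : x' ∈ atm S.W c x :=
    hshr x (brr_mem S hstrat hresp hWcl hWb hadd (ssuc S b) x).2 (hmem (ssuc S b))
  exact atm_mono hc.le x h1

lemma brr_open_aux {x : X} {O : Set X} (hxO : x ∈ O) (hO : IsOpen O) :
    ∃ a : Ix κ, ∀ x'' : X, (∀ b, b < a → brr S x'' b = brr S x b) → x'' ∈ O := by
  obtain ⟨i, hxi, hiO⟩ := hWb x O hxO hO
  refine ⟨ssuc S i, ?_⟩
  intro x'' hagree
  have h1 : x'' ∈ Cs S (brr S x) (ssuc S i) := by
    rw [← Cs_dep S hagree]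
    exact (brr_mem S hstrat hresp hWcl hWb hadd (ssuc S i) x'').2
  obtain ⟨c, hc, hshr⟩ := (inv_main S hstrat hresp hWcl hWb hadd (ssuc S i) (brr S x)
    (brr_mem S hstrat hresp hWcl hWb hadd (ssuc S i) x).1).shr i (lt_ssuc S i)
  have h2 : x'' ∈ atm S.W c x :=
    hshr x (brr_mem S hstrat hresp hWcl hWb hadd (ssuc S i) x).2 h1
  exact hiO (atm_subset_of_mem hc hxi h2)

end Derived
section Superclosed

attribute [local instance] Classical.propDecidable

variable {κ : Cardinal.{u}} {X : Type u} [TopologicalSpace X] (S : Setup κ X)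
variable (hstrat : IsIIStrategy S.σ)
variable (hresp : ∀ f a, LegalBelow S.σ f a → LegalI S.σ f a → LegalII S.σ f a)
variable (hWcl : ∀ i, IsClopen (S.W i))
variable (hWb : ∀ (x : X) (U : Set X), x ∈ U → IsOpen U → ∃ i, x ∈ S.W i ∧ S.W i ⊆ U)
variable (hadd : KAdditive κ X)

lemma fair_of_strong {σ : Strategy κ X} (h : WinningStrong σ) : WinningFair σ :=
  ⟨h.1, h.2.1, fun f hf => Or.inr (h.2.2.2 f hf)⟩

include hstrat hresp hWcl hWb hadd

lemma limit_alive (hXne : Nonempty X)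
    (hlim3 : ∀ f a, IsLimitElt a → LegalBelow S.σ f a → (InterBelow (S.σ f) a).Nonempty)
    {y : Ix κ → Ix κ} {α : Ix κ} (hall : ∀ β, β < α → alive S y β)
    (hs : ¬ ∃ m, m < α ∧ ∀ γ, γ < α → γ ≤ m) : alive S y α := by
  have hDl := D_limit S y α hall hs
  by_cases hex : ∃ β : Ix κ, β < α
  · have hssuc_lt : ∀ β, β < α → ssuc S β < α := by
      intro β hβ
      rcases lt_or_eq_of_le (ssuc_le_of_lt S hβ) with h | h
      · exact h
      · exact absurd ⟨β, hβ, fun γ hγ => (lt_ssuc_iff S).mp (h ▸ hγ)⟩ hs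
    have hlimelt : IsLimitElt α := by
      refine ⟨hex, fun b hb => ?_⟩
      by_contra hc
      push_neg at hc
      refine hs ⟨b, hb, fun γ hγ => ?_⟩
      by_contra hgb
      push_neg at hgb
      exact absurd hγ (not_lt.mpr (hc γ hgb))
    have hbelow : LegalBelow S.σ (Hy S y) α := by
      intro β hβ
      exact (inv_main S hstrat hresp hWcl hWb hadd (ssuc S β) y
        (hall _ (hssuc_lt β hβ))).leg β (lt_ssuc S β)
    obtain ⟨u, hu⟩ := hlim3 (Hy S y) α hlimelt hbelow
    have hu' : ∀ β, β < α → u ∈ Cs S y β := by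
      intro β hβ
      have h1 : u ∈ S.σ (Hy S y) β := by
        rw [InterBelow] at hu
        simp only [Set.mem_iInter] at hu
        exact hu β hβ
      exact (hbelow β hβ).2.2.2 h1
    have hni : (⋂ β, ⋂ (_ : β < α), Cs S y β).Nonempty := by
      refine ⟨u, ?_⟩
      simp only [Set.mem_iInter]
      exact hu'
    rw [dif_pos hni] at hDl
    show (D S y α).isSome
    rw [hDl]
    rfl
  · have hni : (⋂ β, ⋂ (_ : β < α), Cs S y β).Nonempty := by
      obtain ⟨x⟩ := hXne
      refine ⟨x, ?_⟩
      simp only [Set.mem_iInter]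
      intro β hβ
      exact absurd ⟨β, hβ⟩ hex
    rw [dif_pos hni] at hDl
    show (D S y α).isSome
    rw [hDl]
    rfl

omit hstrat hresp hWcl hWb hadd in
/-- extension of a node to a full branch choosing alive children. -/
noncomputable def extb (a : Ix κ) (x0f : Ix κ → Ix κ) : Ix κ → Ix κ :=
  (wellFounded_lt (α := Ix κ)).fix (fun β rec =>
    if β < a then x0f β
    else
      idxY S (fun γ => if h : γ < β then rec γ h else jnk S) β
        (if h : (Cs S (fun γ => if h : γ < β then rec γ h else jnk S) β).Nonempty then
          h.choose else S.x0))

omit hstrat hresp hWcl hWb hadd in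
lemma extb_eq (a : Ix κ) (x0f : Ix κ → Ix κ) (β : Ix κ) :
    extb S a x0f β = if β < a then x0f β
      else idxY S (fun γ => if _h : γ < β then extb S a x0f γ else jnk S) β
        (if h : (Cs S (fun γ => if _h : γ < β then extb S a x0f γ else jnk S) β).Nonempty then
          h.choose else S.x0) := by
  conv_lhs => rw [extb, WellFounded.fix_eq]
  rfl

omit hstrat hresp hWcl hWb hadd in
lemma extb_agree (a : Ix κ) (x0f : Ix κ → Ix κ) {β : Ix κ} (hβ : β < a) :
    extb S a x0f β = x0f β := by
  rw [extb_eq, if_pos hβ]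

omit hstrat hresp hWcl hWb hadd in
lemma extb_eq' (a : Ix κ) (x0f : Ix κ → Ix κ) {β : Ix κ} (hβ : ¬ β < a) :
    extb S a x0f β = idxY S (extb S a x0f) β
      (if h : (Cs S (extb S a x0f) β).Nonempty then h.choose else S.x0) := by
  rw [extb_eq, if_neg hβ]
  have hag : ∀ γ, γ < β → (fun γ => if _h : γ < β then extb S a x0f γ else jnk S) γ
      = extb S a x0f γ := fun γ hγ => dif_pos hγ
  have hCs : Cs S (fun γ => if _h : γ < β then extb S a x0f γ else jnk S) β
      = Cs S (extb S a x0f) β := Cs_dep S hag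
  rw [hCs]
  exact idxY_dep S hag _

lemma extb_alive (hXne : Nonempty X)
    (hlim3 : ∀ f a, IsLimitElt a → LegalBelow S.σ f a → (InterBelow (S.σ f) a).Nonempty)
    {a : Ix κ} {x0f : Ix κ → Ix κ} (ha : alive S x0f a) :
    ∀ γ, alive S (extb S a x0f) γ := by
  intro γ
  induction γ using WellFounded.induction (wellFounded_lt (α := Ix κ)) with
  | _ γ IH =>
  by_cases hγa : γ ≤ a
  · have hag : ∀ β, β < γ → extb S a x0f β = x0f β :=
      fun β hβ => extb_agree S a x0f (lt_of_lt_of_le hβ hγa)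
    rw [alive_dep S hag]
    rcases lt_or_eq_of_le hγa with h | h
    · exact alive_below S ha γ h
    · subst h; exact ha
  · push_neg at hγa
    by_cases hs : ∃ m, m < γ ∧ ∀ δ, δ < γ → δ ≤ m
    · obtain ⟨b, hb1, hb2⟩ := hs
      have hγb : γ = ssuc S b := eq_suc_of_max_below S.hreg S.hunc hb1 hb2
      subst hγb
      have hba : ¬ b < a := by
        intro hc
        have : ssuc S b ≤ a := ssuc_le_of_lt S hc
        exact absurd (lt_of_le_of_lt this hγa) (lt_irrefl _)
      have halive_b : alive S (extb S a x0f) b := IH b hb1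
      have hinvb := inv_main S hstrat hresp hWcl hWb hadd b (extb S a x0f) halive_b
      have hne := hinvb.ne
      have hpt : (if h : (Cs S (extb S a x0f) b).Nonempty then h.choose else S.x0)
          ∈ Cs S (extb S a x0f) b := by
        rw [dif_pos hne]
        exact hne.choose_spec
      exact (child_exists S hstrat hresp hWcl hWb hadd halive_b hpt (extb S a x0f)
        (fun _ _ => rfl) (extb_eq' S a x0f hba)).1
    · exact limit_alive S hstrat hresp hWcl hWb hadd hXne hlim3 (fun β hβ => IH β hβ) hs

omit hstrat hresp hWcl hWb hadd in
/-- the tree of alive nodes. -/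
def Tr : Set (TreeSeq κ) := {q | alive S q.2 q.1}

omit hstrat hresp hWcl hWb hadd in
lemma Tr_isTreeOn : IsTreeOn κ (Tr S) := by
  constructor
  · intro a x y h
    show alive S x a ↔ alive S y a
    exact alive_dep S h
  · intro a x hx b hb
    show alive S x b
    rcases lt_or_eq_of_le hb with h | h
    · exact alive_below S hx b h
    · subst h; exact hx

lemma Tr_pruned (hXne : Nonempty X)
    (hlim3 : ∀ f a, IsLimitElt a → LegalBelow S.σ f a → (InterBelow (S.σ f) a).Nonempty) :
    TreePruned κ (Tr S) := by
  intro a x hx c _hc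
  exact ⟨extb S a x, fun b hb => extb_agree S a x hb,
    extb_alive S hstrat hresp hWcl hWb hadd hXne hlim3 hx c⟩

lemma Tr_ltClosed (hXne : Nonempty X)
    (hlim3 : ∀ f a, IsLimitElt a → LegalBelow S.σ f a → (InterBelow (S.σ f) a).Nonempty) :
    TreeLtClosed κ (Tr S) := by
  intro a hlima x hbelow
  have hs : ¬ ∃ m, m < a ∧ ∀ γ, γ < a → γ ≤ m := by
    rintro ⟨m, hm1, hm2⟩
    obtain ⟨c, hc1, hc2⟩ := hlima.2 m hm1
    exact absurd (hm2 c hc2) (not_le.mpr hc1)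
  exact limit_alive S hstrat hresp hWcl hWb hadd hXne hlim3 (fun β hβ => hbelow β hβ) hs

lemma Tr_body (hfair : WinningFair S.σ) : TreeBody κ (Tr S) = Set.range (brf S) := by
  ext y
  constructor
  · intro hy
    have hall : ∀ α, alive S y α := fun α => hy α
    obtain ⟨z, hz⟩ := final_point S hstrat hresp hWcl hWb hadd hfair hall
    exact ⟨z, br_of_point S hstrat hresp hWcl hWb hadd hall hz⟩
  · rintro ⟨x, rfl⟩ a
    show alive S (brr S x) a
    exact (brr_mem S hstrat hresp hWcl hWb hadd a x).1

end Superclosed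
section Homeo

attribute [local instance] Classical.propDecidable

variable {κ : Cardinal.{u}} {X : Type u} [TopologicalSpace X] (S : Setup κ X)
variable (hstrat : IsIIStrategy S.σ)
variable (hresp : ∀ f a, LegalBelow S.σ f a → LegalI S.σ f a → LegalII S.σ f a)
variable (hWcl : ∀ i, IsClopen (S.W i))
variable (hWb : ∀ (x : X) (U : Set X), x ∈ U → IsOpen U → ∃ i, x ∈ S.W i ∧ S.W i ⊆ U)
variable (hadd : KAdditive κ X)

include hstrat hresp hWcl hWb hadd in
lemma homeo_range [T2Space X] : Nonempty (X ≃ₜ ↥(Set.range (brf S))) := by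
  have hinj := brr_injective S hstrat hresp hWcl hWb hadd
  set e : X ≃ ↥(Set.range (brf S)) := Equiv.ofInjective _ hinj with he
  have hcoe : ∀ x, (e x : GenBaire κ) = brf S x := by
    intro x
    simp [he, Equiv.ofInjective_apply]
  have hcont : Continuous e := by
    have heq : (fun x => e x)
        = fun x => (⟨brf S x, Set.mem_range_self x⟩ : ↥(Set.range (brf S))) := by
      funext x
      exact Subtype.ext (hcoe x)
    show Continuous (fun x => e x)
    rw [heq]
    exact (brr_continuous S hstrat hresp hWcl hWb hadd).subtype_mk _
  have hopen : IsOpenMap e := by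
    intro O hO
    rw [isOpen_iff_forall_mem_open]
    rintro b hb
    obtain ⟨x'', hx''O, rfl⟩ := hb
    obtain ⟨a, ha⟩ := brr_open_aux S hstrat hresp hWcl hWb hadd hx''O hO
    refine ⟨Subtype.val ⁻¹' {z : GenBaire κ | ∀ bb, bb < a → z bb = brf S x'' bb},
      ?_, ?_, ?_⟩
    · rintro ⟨v, hv⟩ hvmem
      obtain ⟨z, hz⟩ := hv
      simp only [Set.mem_preimage, Set.mem_setOf_eq] at hvmem
      have hagr : ∀ bb, bb < a → brr S z bb = brr S x'' bb := by
        intro bb hbb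
        have h1 : brf S z bb = v bb := congr_fun hz bb
        have h2 : v bb = brf S x'' bb := hvmem bb hbb
        exact h1.trans h2
      have hzO : z ∈ O := ha z hagr
      refine ⟨z, hzO, ?_⟩
      exact Subtype.ext (by rw [hcoe z]; exact hz)
    · exact (isOpen_cyl a (brf S x'')).preimage continuous_subtype_val
    · simp only [Set.mem_preimage, Set.mem_setOf_eq]
      intro bb hbb
      show (e x'' : GenBaire κ) bb = brf S x'' bb
      rw [hcoe x'']
  exact ⟨e.toHomeomorphOfContinuousOpen hcont hopen⟩

end Homeo

end Stmt4

/-- every κ-additive fSC_κ-space is homeomorphic to a closed subset of κ^κ;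
if moreover it is an SC_κ-space, to a superclosed subset. -/
theorem stmt_4 (κ : Cardinal.{u}) (hreg : κ.IsRegular) (hunc : ℵ₀ < κ)
    (hpow : (2 : Cardinal.{u}) ^< κ = κ)
    (X : Type u) [TopologicalSpace X] [T2Space X] [RegularSpace X]
    (hadd : KAdditive κ X) (hfsc : fSCSpace κ X) :
    (∃ C : Set (GenBaire κ), IsClosed C ∧ Nonempty (X ≃ₜ ↥C)) ∧
    (SCSpace κ X → ∃ C : Set (GenBaire κ), IsSuperclosedSet κ C ∧ Nonempty (X ≃ₜ ↥C)) := by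
  classical
  by_cases hX : Nonempty X
  · -- nonempty case
    obtain ⟨x0⟩ := hX
    obtain ⟨hwt, σf, hfair⟩ := hfsc
    obtain ⟨W, hWcl, hWb⟩ := Stmt4.exists_clopen_basis hreg hunc hpow hadd ⟨x0⟩ hwt
    constructor
    · set S : Stmt4.Setup κ X := ⟨hreg, hunc, hpow, W, σf, x0⟩ with hS
      refine ⟨Set.range (Stmt4.brf S), ?_, ?_⟩
      · exact Stmt4.range_closed S hfair.1 hfair.2.1 hWcl hWb hadd hfair
      · exact Stmt4.homeo_range S hfair.1 hfair.2.1 hWcl hWb hadd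
    · intro hsc
      obtain ⟨_, σs, hstrong⟩ := hsc
      set S : Stmt4.Setup κ X := ⟨hreg, hunc, hpow, W, σs, x0⟩ with hS
      have hfair' : WinningFair σs := Stmt4.fair_of_strong (X := X) hstrong
      have hstrat : IsIIStrategy S.σ := hstrong.1
      have hresp : ∀ f a, LegalBelow S.σ f a → LegalI S.σ f a → LegalII S.σ f a :=
        hstrong.2.1
      have hlim3 : ∀ f a, IsLimitElt a → LegalBelow S.σ f a →
          (InterBelow (S.σ f) a).Nonempty := hstrong.2.2.1
      refine ⟨Set.range (Stmt4.brf S), ⟨Stmt4.Tr S, ⟨Stmt4.Tr_isTreeOn S, ?_, ?_⟩, ?_⟩, ?_⟩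
      · exact Stmt4.Tr_pruned S hstrat hresp hWcl hWb hadd ⟨x0⟩ hlim3
      · exact Stmt4.Tr_ltClosed S hstrat hresp hWcl hWb hadd ⟨x0⟩ hlim3
      · exact (Stmt4.Tr_body S hstrat hresp hWcl hWb hadd hfair').symm
      · exact Stmt4.homeo_range S hstrat hresp hWcl hWb hadd
  · -- empty case
    have hIE : IsEmpty X := not_nonempty_iff.mp hX
    have hIxne : Nonempty (κ.ord.ToType) := Stmt4.ix_nonempty hunc
    haveI : IsEmpty ↥(∅ : Set (GenBaire κ)) := Set.isEmpty_coe_sort.mpr rfl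
    have hEmptyHomeo : Nonempty (X ≃ₜ ↥(∅ : Set (GenBaire κ))) := by
      refine ⟨⟨Equiv.equivOfIsEmpty X ↥(∅ : Set (GenBaire κ)), ?_, ?_⟩⟩
      · refine continuous_def.mpr fun s _ => ?_
        rw [Set.eq_empty_of_isEmpty (_ ⁻¹' s)]
        exact isOpen_empty
      · refine continuous_def.mpr fun s _ => ?_
        rw [Set.eq_empty_of_isEmpty (_ ⁻¹' s)]
        exact isOpen_empty
    constructor
    · exact ⟨∅, isClosed_empty, hEmptyHomeo⟩
    · intro _
      refine ⟨∅, ⟨(∅ : Set (TreeSeq κ)), ⟨⟨fun a x y _ => Iff.rfl,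
          fun a x hx => absurd hx (Set.notMem_empty _)⟩,
          fun a x hx => absurd hx (Set.notMem_empty _),
          fun a hlima x hbelow => ?_⟩, ?_⟩, hEmptyHomeo⟩
      · obtain ⟨b, hb⟩ := hlima.1
        exact absurd (hbelow b hb) (Set.notMem_empty _)
      · ext x
        constructor
        · intro h
          exact absurd h (Set.notMem_empty _)
        · intro h
          obtain ⟨a⟩ := hIxne
          exact absurd (h a) (Set.notMem_empty _)


end GDST
end

section
/- Let 𝔾 be a linearly ordered abelian group of degree κ, let X be a 𝔾-metrizable space, let (Y,d) be a Cauchy-complete 𝔾-metric space, let A ⊆ X and let f : A → Y be continuous. Then there exist a G_δ^κ set B ⊆ X with A ⊆ B ⊆ cl(A) and a continuous function g : B → Y with g↾A = f. -/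
universe u v

open Cardinal Set

namespace GDST

section Stmt7Helpers

variable {G : Type u} [AddCommGroup G] [LinearOrder G] [IsOrderedAddMonoid G]

lemma exists_pos_of_hasDegree {κ : Cardinal.{u}} (hunc : ℵ₀ < κ) (hG : HasDegree G κ) :
    ∃ ε : G, 0 < ε := by
  by_contra h
  push_neg at h
  have h2 := hG.2 ∅ (by simp) (fun δ hδ => absurd hδ (not_lt.mpr (h δ)))
  rw [Cardinal.mk_emptyCollection] at h2
  exact absurd (hunc.trans_le h2) (not_lt.mpr (zero_le (a := ℵ₀)))

lemma exists_half {κ : Cardinal.{u}} (hunc : ℵ₀ < κ) (hG : HasDegree G κ) {δ : G}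
    (hδ : 0 < δ) : ∃ ε : G, 0 < ε ∧ ε + ε ≤ δ := by
  have hnm : ∃ p : G, 0 < p ∧ p < δ := by
    by_contra h
    push_neg at h
    have h2 := hG.2 {δ} (by rintro ε hε; rw [Set.mem_singleton_iff] at hε; subst hε; exact hδ)
      (fun γ hγ => ⟨δ, Set.mem_singleton _, h γ hγ⟩)
    rw [Cardinal.mk_singleton] at h2
    exact absurd (hunc.trans_le h2) (not_lt.mpr Cardinal.one_lt_aleph0.le)
  obtain ⟨p, hp, hpδ⟩ := hnm
  refine ⟨min p (δ - p), lt_min hp (sub_pos.mpr hpδ), ?_⟩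
  calc min p (δ - p) + min p (δ - p) ≤ p + (δ - p) :=
        add_le_add (min_le_left _ _) (min_le_right _ _)
    _ = δ := by abel

lemma isOpen_gball {Z : Type u} [t : TopologicalSpace Z] {ρ : Z → Z → G}
    (hρc : GCompatible ρ) {z : Z} {ε : G} (hε : 0 < ε) : IsOpen (GBall ρ z ε) := by
  rw [← hρc]
  exact TopologicalSpace.isOpen_generateFrom_of_mem ⟨z, ε, hε, rfl⟩

lemma gball_mem_self {Z : Type u} {ρ : Z → Z → G} (hρ : IsGMetric ρ) (z : Z) {ε : G}
    (hε : 0 < ε) : z ∈ GBall ρ z ε := by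
  show ρ z z < ε
  rw [(hρ.eq_zero_iff z z).mpr rfl]
  exact hε

lemma exists_gball_subset {Z : Type u} [t : TopologicalSpace Z] {ρ : Z → Z → G}
    (hρ : IsGMetric ρ) (hρc : GCompatible ρ) (hpos : ∃ ε : G, 0 < ε)
    {V : Set Z} (hV : IsOpen V) : ∀ z ∈ V, ∃ η : G, 0 < η ∧ GBall ρ z η ⊆ V := by
  rw [← hρc] at hV
  have hV' : TopologicalSpace.GenerateOpen {U | ∃ x ε, 0 < ε ∧ U = GBall ρ x ε} V := hV
  clear hV
  induction hV' with
  | basic U hU =>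
    obtain ⟨x, ε, hε, rfl⟩ := hU
    intro z hz
    refine ⟨ε - ρ x z, sub_pos.mpr hz, fun y hy => ?_⟩
    have h2 : ρ z y < ε - ρ x z := hy
    show ρ x y < ε
    calc ρ x y ≤ ρ x z + ρ z y := hρ.triangle x z y
      _ < ρ x z + (ε - ρ x z) := add_lt_add_right h2 _
      _ = ε := by abel
  | univ =>
    intro z _
    obtain ⟨ε, hε⟩ := hpos
    exact ⟨ε, hε, Set.subset_univ _⟩
  | inter U1 U2 hU1 hU2 ih1 ih2 =>
    intro z hz
    obtain ⟨η1, h1, hs1⟩ := ih1 z hz.1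
    obtain ⟨η2, h2, hs2⟩ := ih2 z hz.2
    refine ⟨min η1 η2, lt_min h1 h2, Set.subset_inter ?_ ?_⟩
    · exact fun y hy => hs1 (lt_of_lt_of_le hy (min_le_left _ _))
    · exact fun y hy => hs2 (lt_of_lt_of_le hy (min_le_right _ _))
  | sUnion S hS ih =>
    intro z hz
    obtain ⟨U, hU, hzU⟩ := hz
    obtain ⟨η, hη, hs⟩ := ih U hU z hzU
    exact ⟨η, hη, hs.trans (Set.subset_sUnion_of_mem hU)⟩

lemma mem_closure_iff_gball {Z : Type u} [t : TopologicalSpace Z] {ρ : Z → Z → G}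
    (hρ : IsGMetric ρ) (hρc : GCompatible ρ) (hpos : ∃ ε : G, 0 < ε)
    {A : Set Z} {z : Z} : z ∈ closure A ↔ ∀ η : G, 0 < η → ∃ a ∈ A, ρ z a < η := by
  rw [mem_closure_iff]
  constructor
  · intro h η hη
    obtain ⟨a, ha, haA⟩ := h (GBall ρ z η) (isOpen_gball hρc hη) (gball_mem_self hρ z hη)
    exact ⟨a, haA, ha⟩
  · intro h O hO hzO
    obtain ⟨η, hη, hsub⟩ := exists_gball_subset hρ hρc hpos hO z hzO
    obtain ⟨a, haA, ha⟩ := h η hη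
    exact ⟨a, hsub ha, haA⟩

lemma gconv_unique {κ : Cardinal.{u}} (hunc : ℵ₀ < κ) (hG : HasDegree G κ)
    {Z : Type u} {ρ : Z → Z → G} (hρ : IsGMetric ρ)
    {s : κ.ord.ToType → Z} {y1 y2 : Z} (h1 : GConvergesTo κ ρ s y1)
    (h2 : GConvergesTo κ ρ s y2) : y1 = y2 := by
  have key : ∀ η : G, 0 < η → ρ y1 y2 < η := by
    intro η hη
    obtain ⟨ε, hε, hεη⟩ := exists_half hunc hG hη
    obtain ⟨a1, ha1⟩ := h1 ε hε
    obtain ⟨a2, ha2⟩ := h2 ε hε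
    calc ρ y1 y2 ≤ ρ y1 (s (max a1 a2)) + ρ (s (max a1 a2)) y2 := hρ.triangle _ _ _
      _ < ε + ε := add_lt_add
          (by rw [hρ.symm]; exact ha1 _ (le_max_left _ _)) (ha2 _ (le_max_right _ _))
      _ ≤ η := hεη
  by_contra hne
  have hposd : 0 < ρ y1 y2 :=
    lt_of_le_of_ne (hρ.nonneg _ _) (fun h => hne ((hρ.eq_zero_iff _ _).mp h.symm))
  exact absurd (key _ hposd) (lt_irrefl _)

end Stmt7Helpers

/-- extension of continuous maps into Cauchy-complete 𝔾-metric spaces from an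
arbitrary subset to a G_δ^κ subset between it and its closure. -/
theorem stmt_7 (κ : Cardinal.{u}) (hreg : κ.IsRegular) (hunc : ℵ₀ < κ)
    (hpow : (2 : Cardinal.{u}) ^< κ = κ)
    (G : Type u) [AddCommGroup G] [LinearOrder G] [IsOrderedAddMonoid G] (hG : HasDegree G κ)
    (X : Type u) [TopologicalSpace X] (hX : GMetrizable G X)
    (Y : Type u) [TopologicalSpace Y] (d : Y → Y → G) (hd : IsGMetric d)
    (hdc : GCompatible d) (hdcc : GCauchyComplete κ d)
    (A : Set X) (f : ↥A → Y) (hf : Continuous f) :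
    ∃ B : Set X, IsGDeltaKappa κ B ∧ ∃ hAB : A ⊆ B, B ⊆ closure A ∧
      ∃ g : ↥B → Y, Continuous g ∧ ∀ (x : X) (hx : x ∈ A), g ⟨x, hAB hx⟩ = f ⟨x, hx⟩ := by
  classical
  obtain ⟨ρ, hρ, hρc⟩ := hX
  have hpos : ∃ ε : G, 0 < ε := exists_pos_of_hasDegree hunc hG
  obtain ⟨S, hSpos, hScoi, hSle⟩ := hG.1
  have hSeq : #(↥S) = κ := le_antisymm hSle (hG.2 S hSpos hScoi)
  have hmkt : #(κ.ord.ToType) = κ := by rw [Cardinal.mk_toType, Cardinal.card_ord]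
  obtain ⟨e⟩ : Nonempty (κ.ord.ToType ≃ ↥S) := Cardinal.eq.mp (by rw [hmkt, hSeq])
  set ε : κ.ord.ToType → G := fun i => (e i : G) with hεdef
  have hεpos : ∀ i, 0 < ε i := fun i => hSpos _ (e i).2
  have hεcoi : ∀ δ : G, 0 < δ → ∃ i, ε i ≤ δ := by
    intro δ hδ
    obtain ⟨s, hsS, hs⟩ := hScoi δ hδ
    refine ⟨e.symm ⟨s, hsS⟩, ?_⟩
    simp only [hεdef, Equiv.apply_symm_apply]
    exact hs
  -- initial segments are small
  have hIic : ∀ i : κ.ord.ToType, #(Set.Iic i) < κ := by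
    intro i
    rw [← Set.Iio_insert]
    calc #(insert i (Set.Iio i) : Set _) ≤ #(Set.Iio i) + 1 := Cardinal.mk_insert_le
      _ < κ := Cardinal.add_lt_of_lt hreg.aleph0_le (Cardinal.mk_Iio_ord_toType i)
          (Cardinal.one_lt_aleph0.trans hunc)
  -- strict lower bounds for initial segments of ε
  have hδex : ∀ i : κ.ord.ToType, ∃ δ : G, 0 < δ ∧ ∀ j, j ≤ i → δ < ε j := by
    intro i
    have hS'pos : ∀ x ∈ ε '' Set.Iic i, 0 < x := by rintro x ⟨j, _, rfl⟩; exact hεpos j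
    have hS'lt : #(↥(ε '' Set.Iic i)) < κ := lt_of_le_of_lt Cardinal.mk_image_le (hIic i)
    have hnot : ¬ ∀ δ : G, 0 < δ → ∃ x ∈ ε '' Set.Iic i, x ≤ δ := fun h =>
      absurd (hG.2 _ hS'pos h) (not_le.mpr hS'lt)
    push_neg at hnot
    obtain ⟨δ, hδ, hall⟩ := hnot
    exact ⟨δ, hδ, fun j hj => hall (ε j) ⟨j, hj, rfl⟩⟩
  choose δs hδpos hδlt using hδex
  have htail : ∀ η : G, 0 < η → ∃ j, ∀ i, j ≤ i → δs i < η := by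
    intro η hη
    obtain ⟨j, hj⟩ := hεcoi η hη
    exact ⟨j, fun i hi => lt_of_lt_of_le (hδlt i j hi) hj⟩
  -- approximating points from A
  have hapex : ∀ (x : ↥(closure A)) (i : κ.ord.ToType), ∃ a : ↥A, ρ x.1 a.1 < δs i := by
    intro x i
    obtain ⟨a, haA, ha⟩ := (mem_closure_iff_gball hρ hρc hpos).mp x.2 (δs i) (hδpos i)
    exact ⟨⟨a, haA⟩, ha⟩
  choose ap hap using hapex
  -- continuity of f, metrically
  have hfc : ∀ (p : ↥A) (η : G), 0 < η → ∃ W : Set X, IsOpen W ∧ p.1 ∈ W ∧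
      ∀ q : ↥A, q.1 ∈ W → d (f p) (f q) < η := by
    intro p η hη
    have hpre : IsOpen (f ⁻¹' (GBall d (f p) η)) := (isOpen_gball hdc hη).preimage hf
    obtain ⟨W, hW, hWeq⟩ := isOpen_induced_iff.mp hpre
    refine ⟨W, hW, ?_, ?_⟩
    · have hmem : p ∈ f ⁻¹' (GBall d (f p) η) := gball_mem_self hd (f p) hη
      rw [← hWeq] at hmem
      exact hmem
    · intro q hq
      have hmem : q ∈ f ⁻¹' (GBall d (f p) η) := by rw [← hWeq]; exact hq
      exact hmem
  -- oscillation sets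
  set O : G → Set X := fun η =>
    ⋃₀ {U | IsOpen U ∧ ∀ p q : ↥A, p.1 ∈ U → q.1 ∈ U → d (f p) (f q) < η} with hOdef
  have hOopen : ∀ η, IsOpen (O η) := fun η => isOpen_sUnion fun U hU => hU.1
  have hAO : ∀ η : G, 0 < η → A ⊆ O η := by
    intro η hη a ha
    obtain ⟨ε', hε', hε'η⟩ := exists_half hunc hG hη
    obtain ⟨W, hW, haW, hWd⟩ := hfc ⟨a, ha⟩ ε' hε'
    refine Set.mem_sUnion.mpr ⟨W, ⟨hW, ?_⟩, haW⟩
    intro p q hp hq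
    calc d (f p) (f q) ≤ d (f p) (f ⟨a, ha⟩) + d (f ⟨a, ha⟩) (f q) := hd.triangle _ _ _
      _ < ε' + ε' := add_lt_add (by rw [hd.symm]; exact hWd p hp) (hWd q hq)
      _ ≤ η := hε'η
  -- the Gδ set B
  set C : κ.ord.ToType → Set X := fun i => ⋃ a : ↥A, GBall ρ a.1 (ε i) with hCdef
  have hCopen : ∀ i, IsOpen (C i) := fun i => isOpen_iUnion fun a => isOpen_gball hρc (hεpos i)
  set B : Set X := closure A ∩ ⋂ i, O (ε i) with hBdef
  have hBeq : B = ⋂ i, (C i ∩ O (ε i)) := by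
    ext x
    simp only [hBdef, hCdef, Set.mem_inter_iff, Set.mem_iInter, Set.mem_iUnion]
    constructor
    · rintro ⟨hxc, hxo⟩ i
      refine ⟨?_, hxo i⟩
      obtain ⟨a, haA, ha⟩ := (mem_closure_iff_gball hρ hρc hpos).mp hxc (ε i) (hεpos i)
      exact ⟨⟨a, haA⟩, by show ρ a x < ε i; rw [hρ.symm]; exact ha⟩
    · intro h
      refine ⟨?_, fun i => (h i).2⟩
      rw [mem_closure_iff_gball hρ hρc hpos]
      intro η hη
      obtain ⟨i, hi⟩ := hεcoi η hη
      obtain ⟨a, ha⟩ := (h i).1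
      refine ⟨a.1, a.2, ?_⟩
      rw [hρ.symm]
      exact lt_of_lt_of_le ha hi
  have hGδ : IsGDeltaKappa κ B :=
    ⟨fun i => C i ∩ O (ε i), fun i => (hCopen i).inter (hOopen _), hBeq⟩
  have hABs : A ⊆ B := fun x hx =>
    ⟨subset_closure hx, Set.mem_iInter.mpr fun i => hAO (ε i) (hεpos i) hx⟩
  have hBcl : B ⊆ closure A := Set.inter_subset_left
  -- the approximating nets enter any open neighbourhood eventually
  set F : ↥(closure A) → κ.ord.ToType → Y := fun x i => f (ap x i) with hFdef
  have hmemU : ∀ (x : ↥(closure A)) (U : Set X), IsOpen U → x.1 ∈ U →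
      ∃ j, ∀ i, j ≤ i → (ap x i).1 ∈ U := by
    intro x U hU hxU
    obtain ⟨η, hη, hsub⟩ := exists_gball_subset hρ hρc hpos hU x.1 hxU
    obtain ⟨j, hj⟩ := htail η hη
    exact ⟨j, fun i hi => hsub ((hap x i).trans (hj i hi))⟩
  -- small-oscillation neighbourhoods of points of B
  have hOsc : ∀ x : X, x ∈ B → ∀ η : G, 0 < η → ∃ U, IsOpen U ∧ x ∈ U ∧
      ∀ p q : ↥A, p.1 ∈ U → q.1 ∈ U → d (f p) (f q) < η := by
    intro x hx η hη
    obtain ⟨i, hi⟩ := hεcoi η hη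
    have hxO : x ∈ O (ε i) := Set.mem_iInter.mp hx.2 i
    rw [hOdef] at hxO
    obtain ⟨U, ⟨hUo, hUd⟩, hxU⟩ := Set.mem_sUnion.mp hxO
    exact ⟨U, hUo, hxU, fun p q hp hq => lt_of_lt_of_le (hUd p q hp hq) hi⟩
  -- Cauchyness
  have hCauchy : ∀ x : ↥(closure A), x.1 ∈ B → GCauchy κ d (F x) := by
    intro x hx η hη
    obtain ⟨U, hUo, hxU, hUd⟩ := hOsc x.1 hx η hη
    obtain ⟨j, hj⟩ := hmemU x U hUo hxU
    exact ⟨j, fun b hb c hc => hUd _ _ (hj b hb) (hj c hc)⟩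
  -- define g by taking limits
  have hlim : ∀ x : ↥B, ∃ y, GConvergesTo κ d (F ⟨x.1, hBcl x.2⟩) y :=
    fun x => hdcc _ (hCauchy ⟨x.1, hBcl x.2⟩ x.2)
  choose g hg using hlim
  -- metric continuity estimate for g
  have hgest : ∀ (x : ↥B) (η : G), 0 < η → ∃ U, IsOpen U ∧ x.1 ∈ U ∧
      ∀ x' : ↥B, x'.1 ∈ U → d (g x) (g x') < η := by
    intro x η hη
    obtain ⟨ε1, hε1, hε1η⟩ := exists_half hunc hG hη
    obtain ⟨ε2, hε2, hε2η⟩ := exists_half hunc hG hε1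
    have hε21 : ε2 ≤ ε1 := le_trans (le_add_of_nonneg_left hε2.le) hε2η
    have h3 : ε2 + (ε2 + ε2) ≤ η :=
      le_trans (add_le_add hε21 hε2η) hε1η
    obtain ⟨U, hUo, hxU, hUd⟩ := hOsc x.1 x.2 ε2 hε2
    refine ⟨U, hUo, hxU, ?_⟩
    intro x' hx'
    obtain ⟨j1, hj1⟩ := hmemU ⟨x.1, hBcl x.2⟩ U hUo hxU
    obtain ⟨j2, hj2⟩ := hmemU ⟨x'.1, hBcl x'.2⟩ U hUo hx'
    obtain ⟨a1, ha1⟩ := hg x ε2 hε2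
    obtain ⟨a2, ha2⟩ := hg x' ε2 hε2
    set b := max (max a1 a2) (max j1 j2) with hbdef
    have t1 : d (g x) (F ⟨x.1, hBcl x.2⟩ b) < ε2 := by
      rw [hd.symm]
      exact ha1 b (le_trans (le_max_left _ _) (le_max_left _ _))
    have t2 : d (F ⟨x.1, hBcl x.2⟩ b) (F ⟨x'.1, hBcl x'.2⟩ b) < ε2 :=
      hUd _ _ (hj1 b (le_trans (le_max_left _ _) (le_max_right _ _)))
        (hj2 b (le_trans (le_max_right _ _) (le_max_right _ _)))
    have t3 : d (F ⟨x'.1, hBcl x'.2⟩ b) (g x') < ε2 := ha2 b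
      (le_trans (le_max_right _ _) (le_max_left _ _))
    calc d (g x) (g x')
        ≤ d (g x) (F ⟨x.1, hBcl x.2⟩ b) + d (F ⟨x.1, hBcl x.2⟩ b) (g x') := hd.triangle _ _ _
      _ ≤ d (g x) (F ⟨x.1, hBcl x.2⟩ b) +
          (d (F ⟨x.1, hBcl x.2⟩ b) (F ⟨x'.1, hBcl x'.2⟩ b) +
            d (F ⟨x'.1, hBcl x'.2⟩ b) (g x')) := add_le_add le_rfl (hd.triangle _ _ _)
      _ < ε2 + (ε2 + ε2) := add_lt_add t1 (add_lt_add t2 t3)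
      _ ≤ η := h3
  -- continuity of g
  have hgcont : Continuous g := by
    rw [continuous_def]
    intro V hV
    have hx' : ∀ x : ↥B, g x ∈ V → ∃ U, IsOpen U ∧ x.1 ∈ U ∧
        ∀ x' : ↥B, x'.1 ∈ U → g x' ∈ V := by
      intro x hx
      obtain ⟨η, hη, hsub⟩ := exists_gball_subset hd hdc hpos hV (g x) hx
      obtain ⟨U, hUo, hxU, hUd⟩ := hgest x η hη
      exact ⟨U, hUo, hxU, fun x' h => hsub (hUd x' h)⟩
    choose U hUo hUm hUs using hx'
    refine isOpen_induced_iff.mpr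
      ⟨⋃ (x : ↥B) (h : g x ∈ V), U x h,
        isOpen_iUnion fun x => isOpen_iUnion fun h => hUo x h, ?_⟩
    ext q
    simp only [Set.mem_preimage, Set.mem_iUnion]
    constructor
    · rintro ⟨x, h, hq⟩
      exact hUs x h q hq
    · intro h
      exact ⟨q, h, hUm q h⟩
  refine ⟨B, hGδ, hABs, hBcl, g, hgcont, ?_⟩
  intro x hx
  have hconv : GConvergesTo κ d (F ⟨x, hBcl (hABs hx)⟩) (f ⟨x, hx⟩) := by
    intro η hη
    obtain ⟨ε', hε', hε'η⟩ := exists_half hunc hG hη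
    obtain ⟨W, hWo, hxW, hWd⟩ := hfc ⟨x, hx⟩ ε' hε'
    obtain ⟨j, hj⟩ := hmemU ⟨x, hBcl (hABs hx)⟩ W hWo hxW
    refine ⟨j, fun b hb => ?_⟩
    have hWb := hWd (ap ⟨x, hBcl (hABs hx)⟩ b) (hj b hb)
    rw [hd.symm]
    exact lt_of_lt_of_le hWb (le_trans (le_add_of_nonneg_left hε'.le) hε'η)
  exact gconv_unique hunc hG hd (hg ⟨x, hABs hx⟩) hconv


end GDST
end

section
/- Let 𝔾 be a linearly ordered abelian group of degree κ, let X be a 𝔾-Polish space and let Y ⊆ X. Then Y with the subspace topology is 𝔾-Polish if and only if Y is a G_δ^κ subset of X. -/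
universe u v

open Cardinal Set

namespace GDST

/-! ### Auxiliary lemmas for Statement 8 -/

section Stmt8Aux

open Topology

variable {κ : Cardinal.{u}} {G : Type u} [AddCommGroup G] [LinearOrder G] [IsOrderedAddMonoid G]

/-- There is a positive element of `G`. -/
theorem aux_exists_pos (hreg : κ.IsRegular) (hG : HasDegree G κ) : ∃ δ : G, 0 < δ := by
  by_contra h
  push_neg at h
  have := hG.2 ∅ (by simp) (by intro δ hδ; exact absurd hδ (not_lt.2 (h δ)))
  simp only [Cardinal.mk_emptyCollection] at this
  exact absurd (this.trans_lt' hreg.pos) (lt_irrefl _)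

/-- Any small set of positive elements has a positive strict lower bound. -/
theorem aux_slb (hreg : κ.IsRegular) (hG : HasDegree G κ) (S : Set G)
    (hS : ∀ x ∈ S, (0:G) < x) (hcard : #S < κ) :
    ∃ δ : G, 0 < δ ∧ ∀ x ∈ S, δ < x := by
  by_contra h
  push_neg at h
  have hco : ∀ δ : G, 0 < δ → ∃ ε ∈ S, ε ≤ δ := by
    intro δ hδ
    obtain ⟨x, hxS, hx⟩ := h δ hδ
    exact ⟨x, hxS, hx⟩
  exact absurd (hG.2 S hS hco) (not_le.2 hcard)

/-- Halving: below every positive element there is a positive `η` with `η + η` below it. -/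
theorem aux_half (hreg : κ.IsRegular) (hG : HasDegree G κ) {δ : G} (hδ : 0 < δ) :
    ∃ η : G, 0 < η ∧ η + η ≤ δ := by
  obtain ⟨c, hc, hlt⟩ := aux_slb hreg hG {δ} (by simpa using hδ)
    (by rw [Cardinal.mk_singleton]; exact Cardinal.one_lt_aleph0.trans_le hreg.aleph0_le)
  have hcδ : c < δ := hlt δ rfl
  refine ⟨min c (δ - c), lt_min hc (sub_pos.2 hcδ), ?_⟩
  calc min c (δ - c) + min c (δ - c) ≤ c + (δ - c) :=
        add_le_add (min_le_left _ _) (min_le_right _ _)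
    _ = δ := by abel

/-- Non-Archimedean: below every positive element there is a positive `β` all of whose
natural multiples stay below it. -/
theorem aux_nonarch (hunc : ℵ₀ < κ) (hreg : κ.IsRegular) (hG : HasDegree G κ)
    {c : G} (hc : 0 < c) : ∃ β : G, 0 < β ∧ ∀ n : ℕ, n • β ≤ c := by
  have H : ∀ x : {g : G // 0 < g}, ∃ y : {g : G // 0 < g}, y.1 + y.1 ≤ x.1 := by
    intro x
    obtain ⟨η, hη, hηx⟩ := aux_half hreg hG x.2
    exact ⟨⟨η, hη⟩, hηx⟩
  choose Hf hHf using H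
  set f : ℕ → {g : G // 0 < g} := fun n => Hf^[n] (Hf ⟨c, hc⟩) with hf
  have hstep : ∀ n, (f (n + 1)).1 + (f (n + 1)).1 ≤ (f n).1 := by
    intro n
    have : f (n + 1) = Hf (f n) := by
      rw [hf]; exact Function.iterate_succ_apply' _ _ _
    rw [this]; exact hHf (f n)
  have hf0 : (f 0).1 + (f 0).1 ≤ c := hHf ⟨c, hc⟩
  obtain ⟨β, hβ, hβlt⟩ := aux_slb hreg hG (Set.range fun n => (f n).1)
    (by rintro x ⟨n, rfl⟩; exact (f n).2)
    (by
      have := (Set.countable_range (fun n => (f n).1)).to_subtype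
      exact (Cardinal.mk_le_aleph0).trans_lt hunc)
  refine ⟨β, hβ, ?_⟩
  have hβle : ∀ n, β ≤ (f n).1 := fun n => (hβlt _ ⟨n, rfl⟩).le
  have h2 : ∀ n m : ℕ, 2 ^ n • (f (m + n)).1 ≤ (f m).1 := by
    intro n
    induction n with
    | zero => intro m; simp
    | succ n ih =>
      intro m
      have e : m + (n + 1) = m + 1 + n := by omega
      have e2 : (2:ℕ) ^ (n + 1) = 2 ^ n + 2 ^ n := by rw [pow_succ, Nat.mul_two]
      calc 2 ^ (n + 1) • (f (m + (n + 1))).1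
          = 2 ^ n • (f (m + 1 + n)).1 + 2 ^ n • (f (m + 1 + n)).1 := by
            rw [e, e2, add_nsmul]
        _ ≤ (f (m + 1)).1 + (f (m + 1)).1 := add_le_add (ih (m+1)) (ih (m+1))
        _ ≤ (f m).1 := hstep m
  have h3 : ∀ n : ℕ, 2 ^ n • β ≤ c := by
    intro n
    calc 2 ^ n • β ≤ 2 ^ n • (f (0 + n)).1 :=
          nsmul_le_nsmul_right (hβle _) _
      _ ≤ (f 0).1 := h2 n 0
      _ ≤ c := le_add_of_nonneg_left (f 0).2.le |>.trans hf0
  intro n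
  calc n • β ≤ 2 ^ n • β := nsmul_le_nsmul_left hβ.le (Nat.lt_two_pow_self (n := n)).le
    _ ≤ c := h3 n

/-- Initial segments of `κ.ord.ToType` are small. -/
theorem aux_mk_Iic (hreg : κ.IsRegular) (a : κ.ord.ToType) : #(Set.Iic a) < κ := by
  rw [← Set.Iio_insert]
  refine (Cardinal.mk_insert_le).trans_lt ?_
  exact Cardinal.add_lt_of_lt hreg.aleph0_le (Cardinal.mk_Iio_ord_toType a)
    (Cardinal.one_lt_aleph0.trans_le hreg.aleph0_le)

/-- Small subsets of `κ.ord.ToType` are bounded. -/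
theorem aux_bdd (hreg : κ.IsRegular) (A : Set κ.ord.ToType) (hA : #A < κ) :
    ∃ b, ∀ a ∈ A, a ≤ b := by
  by_contra h
  push_neg at h
  have hcov : (Set.univ : Set κ.ord.ToType) ⊆ ⋃ a : A, Set.Iic a.1 := by
    intro b _
    obtain ⟨a, haA, hab⟩ := h b
    exact Set.mem_iUnion.2 ⟨⟨a, haA⟩, hab.le⟩
  have h1 : κ ≤ #(⋃ a : A, Set.Iic a.1) := by
    calc κ = #(Set.univ : Set κ.ord.ToType) := by
          rw [Cardinal.mk_univ, Cardinal.mk_ord_toType]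
      _ ≤ _ := Cardinal.mk_le_mk_of_subset hcov
  have h2 : #(⋃ a : A, Set.Iic a.1) < κ := by
    refine (Cardinal.mk_iUnion_le _).trans_lt ?_
    refine Cardinal.mul_lt_of_lt hreg.aleph0_le hA ?_
    exact Cardinal.iSup_lt_of_isRegular hreg hA fun a => aux_mk_Iic hreg a.1
  exact absurd (h1.trans_lt h2) (lt_irrefl κ)

/-- `κ.ord.ToType` has no maximal element. -/
theorem aux_exists_gt (hreg : κ.IsRegular) (a : κ.ord.ToType) : ∃ b, a < b := by
  by_contra h
  push_neg at h
  have hcov : (Set.univ : Set κ.ord.ToType) ⊆ Set.Iic a := fun b _ => h b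
  have h1 : κ ≤ #(Set.Iic a) := by
    calc κ = #(Set.univ : Set κ.ord.ToType) := by
          rw [Cardinal.mk_univ, Cardinal.mk_ord_toType]
      _ ≤ _ := Cardinal.mk_le_mk_of_subset hcov
  exact absurd (h1.trans_lt (aux_mk_Iic hreg a)) (lt_irrefl κ)

/-- A strictly decreasing, "self-halving", coinitial `κ`-sequence of positive elements. -/
theorem aux_eps (hunc : ℵ₀ < κ) (hreg : κ.IsRegular) (hG : HasDegree G κ) :
    ∃ ε : κ.ord.ToType → G, (∀ a, 0 < ε a) ∧
      (∀ a b, b < a → ε a + ε a ≤ ε b) ∧ (∀ δ : G, 0 < δ → ∃ a, ε a ≤ δ) := by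
  classical
  obtain ⟨S, hSpos, hSco, hScard⟩ := hG.1
  obtain ⟨δ₀, hδ₀⟩ := aux_exists_pos hreg hG
  obtain ⟨ε₀, hε₀S, hε₀le⟩ := hSco δ₀ hδ₀
  have hcard' : #S ≤ #(κ.ord.ToType) := by rw [Cardinal.mk_ord_toType]; exact hScard
  obtain ⟨emb⟩ := (Cardinal.le_def _ _).mp hcard'
  set s : κ.ord.ToType → G := fun a => if h : ∃ x : ↥S, emb x = a then (h.choose : ↥S).1 else ε₀
    with hs
  have hsS : ∀ a, s a ∈ S := by
    intro a
    rw [hs]; dsimp only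
    split
    · next h => exact h.choose.2
    · exact hε₀S
  have hssurj : ∀ x ∈ S, ∃ a, s a = x := by
    intro x hx
    refine ⟨emb ⟨x, hx⟩, ?_⟩
    have h : ∃ y : ↥S, emb y = emb ⟨x, hx⟩ := ⟨⟨x, hx⟩, rfl⟩
    rw [hs]; dsimp only
    rw [dif_pos h]
    have := emb.injective h.choose_spec
    rw [this]
  have key : ∀ (a : κ.ord.ToType) (rec : ∀ b, b < a → {g : G // 0 < g}),
      ∃ η : G, 0 < η ∧ η + η ≤ s a ∧ ∀ b (hb : b < a), η + η ≤ (rec b hb).1 := by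
    intro a rec
    set T : Set G := insert (s a) (Set.range fun b : Set.Iio a => (rec b.1 b.2).1) with hT
    have hTpos : ∀ x ∈ T, (0:G) < x := by
      intro x hx
      rcases hx with hx | ⟨b, rfl⟩
      · rw [hx]; exact hSpos _ (hsS a)
      · exact (rec b.1 b.2).2
    have hTcard : #T < κ := by
      refine (Cardinal.mk_insert_le).trans_lt ?_
      refine Cardinal.add_lt_of_lt hreg.aleph0_le ?_
        (Cardinal.one_lt_aleph0.trans_le hreg.aleph0_le)
      exact (Cardinal.mk_range_le).trans_lt (Cardinal.mk_Iio_ord_toType a)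
    obtain ⟨δ, hδ, hδlt⟩ := aux_slb hreg hG T hTpos hTcard
    obtain ⟨η, hη, hηδ⟩ := aux_half hreg hG hδ
    refine ⟨η, hη, ?_, ?_⟩
    · exact hηδ.trans (hδlt _ (Set.mem_insert _ _)).le
    · intro b hb
      exact hηδ.trans (hδlt _ (Set.mem_insert_of_mem _ ⟨⟨b, hb⟩, rfl⟩)).le
  let body : ∀ a : κ.ord.ToType, (∀ b, b < a → {g : G // 0 < g}) → {g : G // 0 < g} :=
    fun a rec => ⟨(key a rec).choose, (key a rec).choose_spec.1⟩
  let F : κ.ord.ToType → {g : G // 0 < g} := (wellFounded_lt).fix body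
  have hFeq : ∀ a, F a = body a (fun b _ => F b) := fun a =>
    WellFounded.fix_eq wellFounded_lt body a
  have hspec : ∀ a, 0 < (F a).1 ∧ (F a).1 + (F a).1 ≤ s a ∧
      ∀ b (hb : b < a), (F a).1 + (F a).1 ≤ (F b).1 := by
    intro a
    have h1 := (key a (fun b _ => F b)).choose_spec
    have h2 : F a = ⟨(key a (fun b _ => F b)).choose, (key a (fun b _ => F b)).choose_spec.1⟩ :=
      hFeq a
    rw [h2]
    exact ⟨h1.1, h1.2.1, h1.2.2⟩
  refine ⟨fun a => (F a).1, fun a => (F a).2, ?_, ?_⟩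
  · intro a b hba
    exact (hspec a).2.2 b hba
  · intro δ hδ
    obtain ⟨x, hxS, hxδ⟩ := hSco δ hδ
    obtain ⟨a, ha⟩ := hssurj x hxS
    refine ⟨a, ?_⟩
    have h1 := (hspec a).2.1
    have h2 : (F a).1 ≤ (F a).1 + (F a).1 := le_add_of_nonneg_left (F a).2.le
    rw [ha] at h1
    exact (h2.trans h1).trans hxδ

variable {Z : Type u}

theorem aux_ball_self {d : Z → Z → G} (hd : IsGMetric d) {x : Z} {ε : G} (hε : 0 < ε) :
    x ∈ GBall d x ε := by
  have : d x x = 0 := (hd.eq_zero_iff x x).2 rfl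
  simp only [GBall, Set.mem_setOf_eq, this]
  exact hε

theorem aux_ball_sub {d : Z → Z → G} (hd : IsGMetric d) {x y : Z} {ε : G}
    (hy : y ∈ GBall d x ε) : GBall d y (ε - d x y) ⊆ GBall d x ε := by
  intro z hz
  simp only [GBall, Set.mem_setOf_eq] at *
  calc d x z ≤ d x y + d y z := hd.triangle x y z
    _ < d x y + (ε - d x y) := by exact add_lt_add_right hz _
    _ = ε := by abel

/-- Characterization of open sets in a `𝔾`-metric topology. -/
theorem aux_isOpen_iff {d : Z → Z → G} (hd : IsGMetric d) (hpos : ∃ g : G, 0 < g) (U : Set Z) :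
    IsOpen[GMetricTopology d] U ↔ ∀ x ∈ U, ∃ ε : G, 0 < ε ∧ GBall d x ε ⊆ U := by
  constructor
  · intro h
    have h' : TopologicalSpace.GenerateOpen {V | ∃ x ε, 0 < ε ∧ V = GBall d x ε} U := h
    clear h
    induction h' with
    | basic V hV =>
      obtain ⟨c, η, hη, rfl⟩ := hV
      intro x hx
      refine ⟨η - d c x, sub_pos.2 hx, aux_ball_sub hd hx⟩
    | univ =>
      intro x _
      obtain ⟨g, hg⟩ := hpos
      exact ⟨g, hg, Set.subset_univ _⟩
    | inter V W _ _ ihV ihW =>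
      intro x hx
      obtain ⟨ε₁, hε₁, hb₁⟩ := ihV x hx.1
      obtain ⟨ε₂, hε₂, hb₂⟩ := ihW x hx.2
      refine ⟨min ε₁ ε₂, lt_min hε₁ hε₂, ?_⟩
      intro z hz
      simp only [GBall, Set.mem_setOf_eq] at hz
      exact ⟨hb₁ (lt_of_lt_of_le hz (min_le_left _ _)),
        hb₂ (lt_of_lt_of_le hz (min_le_right _ _))⟩
    | sUnion 𝒮 _ ih =>
      intro x hx
      obtain ⟨V, hV𝒮, hxV⟩ := hx
      obtain ⟨ε, hε, hb⟩ := ih V hV𝒮 x hxV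
      exact ⟨ε, hε, hb.trans (Set.subset_sUnion_of_mem hV𝒮)⟩
  · intro h
    choose! ε hε hb using h
    have hU : U = ⋃ x : U, GBall d x.1 (ε x.1) := by
      apply Set.Subset.antisymm
      · intro x hx
        exact Set.mem_iUnion.2 ⟨⟨x, hx⟩, aux_ball_self hd (hε x hx)⟩
      · intro z hz
        obtain ⟨x, hx⟩ := Set.mem_iUnion.1 hz
        exact hb x.1 x.2 hx
    rw [hU]
    letI := GMetricTopology d
    refine isOpen_iUnion (fun x => ?_)
    exact TopologicalSpace.GenerateOpen.basic _ ⟨x.1, ε x.1, hε x.1 x.2, rfl⟩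

theorem aux_ball_isOpen {d : Z → Z → G} (hd : IsGMetric d) {x : Z} {ε : G} (hε : 0 < ε) :
    IsOpen[GMetricTopology d] (GBall d x ε) :=
  TopologicalSpace.GenerateOpen.basic _ ⟨x, ε, hε, rfl⟩

/-- κ-additivity of `𝔾`-metric topologies when `𝔾` has degree `κ`. -/
theorem aux_kadd (hreg : κ.IsRegular) (hG : HasDegree G κ)
    {d : Z → Z → G} (hd : IsGMetric d) {A : Type u} (f : A → Set Z) (hA : #A < κ)
    (hf : ∀ a, IsOpen[GMetricTopology d] (f a)) :
    IsOpen[GMetricTopology d] (⋂ a, f a) := by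
  have hpos := aux_exists_pos hreg hG
  rw [aux_isOpen_iff hd hpos]
  intro x hx
  have hxa : ∀ a, x ∈ f a := Set.mem_iInter.1 hx
  have h1 : ∀ a : A, ∃ ε : G, 0 < ε ∧ GBall d x ε ⊆ f a := by
    intro a
    obtain ⟨ε, hε, hb⟩ := (aux_isOpen_iff hd hpos (f a)).1 (hf a) x (hxa a)
    exact ⟨ε, hε, hb⟩
  choose ε hε hb using h1
  obtain ⟨δ, hδ, hδlt⟩ := aux_slb hreg hG (Set.range ε) (by rintro _ ⟨a, rfl⟩; exact hε a)
    ((Cardinal.mk_range_le).trans_lt hA)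
  refine ⟨δ, hδ, ?_⟩
  intro z hz
  refine Set.mem_iInter.2 fun a => hb a ?_
  exact lt_of_lt_of_le hz (hδlt _ ⟨a, rfl⟩).le

/-- Clopen interpolation between two "ball margins" of an arbitrary set. -/
theorem aux_clopen (hunc : ℵ₀ < κ) (hreg : κ.IsRegular) (hG : HasDegree G κ)
    {d : Z → Z → G} (hd : IsGMetric d) (U : Set Z) {p q : G} (hq : 0 < q) (hqp : q < p) :
    ∃ C : Set Z, IsOpen[GMetricTopology d] C ∧ IsClosed[GMetricTopology d] C ∧
      {x | GBall d x p ⊆ U} ⊆ C ∧ C ⊆ {x | GBall d x q ⊆ U} := by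
  obtain ⟨β, hβ, hβn⟩ := aux_nonarch hunc hreg hG (sub_pos.2 hqp)
  have hpos : ∃ g : G, 0 < g := ⟨β, hβ⟩
  refine ⟨{x | ∀ n : ℕ, GBall d x (q + n • β) ⊆ U}, ?_, ?_, ?_, ?_⟩
  · rw [aux_isOpen_iff hd hpos]
    intro x hx
    refine ⟨β, hβ, ?_⟩
    intro x' hx' n w hw
    refine hx (n + 1) ?_
    simp only [GBall, Set.mem_setOf_eq] at *
    calc d x w ≤ d x x' + d x' w := hd.triangle _ _ _
      _ < β + (q + n • β) := add_lt_add hx' hw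
      _ = q + (n + 1) • β := by rw [succ_nsmul]; abel
  · letI := GMetricTopology d
    rw [← isOpen_compl_iff]
    rw [aux_isOpen_iff hd hpos]
    intro z hz
    simp only [Set.mem_compl_iff, Set.mem_setOf_eq, not_forall] at hz
    obtain ⟨n, hn⟩ := hz
    rw [Set.not_subset] at hn
    obtain ⟨w, hw, hwU⟩ := hn
    refine ⟨β, hβ, ?_⟩
    intro z' hz'
    simp only [Set.mem_compl_iff, Set.mem_setOf_eq, not_forall]
    refine ⟨n + 1, ?_⟩
    rw [Set.not_subset]
    refine ⟨w, ?_, hwU⟩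
    simp only [GBall, Set.mem_setOf_eq] at *
    calc d z' w ≤ d z' z + d z w := hd.triangle _ _ _
      _ = d z z' + d z w := by rw [hd.symm]
      _ < β + (q + n • β) := add_lt_add hz' hw
      _ = q + (n + 1) • β := by rw [succ_nsmul]; abel
  · intro x hx n w hw
    refine hx ?_
    simp only [GBall, Set.mem_setOf_eq] at *
    refine lt_of_lt_of_le hw ?_
    calc q + n • β ≤ q + (p - q) := add_le_add_right (hβn n) _
      _ = p := by abel
  · intro x hx
    have := hx 0
    simpa using this


/-- Weight of a subspace. -/
theorem aux_weight_subtype {X : Type u} [TopologicalSpace X] (h : HasWeightLE κ X) (Y : Set X) :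
    HasWeightLE κ ↥Y := by
  obtain ⟨B, hB, hBcard⟩ := h
  refine ⟨(fun S => (Subtype.val ⁻¹' S : Set ↥Y)) '' B, ?_, ?_⟩
  · exact hB.isInducing IsInducing.subtypeVal
  · exact (Cardinal.mk_image_le).trans hBcard

/-- Simple consequences of the `aux_eps` sequence. -/
theorem aux_eps_anti {ε : κ.ord.ToType → G} (hpos : ∀ a, 0 < ε a)
    (hhalf : ∀ a b, b < a → ε a + ε a ≤ ε b) :
    (∀ a b, b ≤ a → ε a ≤ ε b) ∧ (∀ a b, b < a → ε a < ε b) := by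
  have hlt : ∀ a b, b < a → ε a < ε b := by
    intro a b h
    calc ε a < ε a + ε a := lt_add_of_pos_left _ (hpos a)
      _ ≤ ε b := hhalf a b h
  exact ⟨fun a b h => h.lt_or_eq.elim (fun h' => (hlt a b h').le) (fun h' => h' ▸ le_rfl), hlt⟩

/-- Strict coinitiality. -/
theorem aux_eps_co_lt (hreg : κ.IsRegular) (hG : HasDegree G κ)
    {ε : κ.ord.ToType → G} (hco : ∀ δ : G, 0 < δ → ∃ a, ε a ≤ δ)
    {δ : G} (hδ : 0 < δ) : ∃ a, ε a < δ := by
  obtain ⟨c, hc, hclt⟩ := aux_slb hreg hG {δ} (by simpa using hδ)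
    (by rw [Cardinal.mk_singleton]; exact Cardinal.one_lt_aleph0.trans_le hreg.aleph0_le)
  obtain ⟨a, ha⟩ := hco c hc
  exact ⟨a, ha.trans_lt (hclt δ rfl)⟩

/-- Forward direction of Statement 8. -/
theorem aux_gdelta_of_polish (hreg : κ.IsRegular) (hunc : ℵ₀ < κ)
    (hG : HasDegree G κ) {X : Type u} [TopologicalSpace X] [T2Space X]
    (hX : GPolish G κ X) (Y : Set X) (hY : GPolish G κ ↥Y) : IsGDeltaKappa κ Y := by
  classical
  obtain ⟨hwX, dX, hdX, hcompX, hcomplX⟩ := hX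
  obtain ⟨hwY, dY, hdY, hcompY, hcomplY⟩ := hY
  obtain ⟨ε, hεpos, hεhalf, hεco⟩ := aux_eps hunc hreg hG
  obtain ⟨hεanti, hεlt⟩ := aux_eps_anti hεpos hεhalf
  have hpos : ∃ g : G, 0 < g := aux_exists_pos hreg hG
  have hopenX : ∀ s : Set X, IsOpen[GMetricTopology dX] s ↔ IsOpen s := by
    intro s; rw [hcompX]
  have hopenY : ∀ s : Set ↥Y, IsOpen[GMetricTopology dY] s ↔ IsOpen s := by
    intro s; rw [hcompY]
  set V : κ.ord.ToType → Set X := fun a => ⋃ y : ↥Y, GBall dX y.1 (ε a) with hV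
  set A : κ.ord.ToType → Set X := fun a =>
    ⋃ W : {W : Set X // IsOpen W ∧ ∀ u v : ↥Y, u.1 ∈ W → v.1 ∈ W → dY u v < ε a}, W.1 with hA
  refine ⟨fun a => V a ∩ A a, ?_, ?_⟩
  · intro a
    refine IsOpen.inter ?_ ?_
    · refine isOpen_iUnion fun y => ?_
      exact (hopenX _).1 (aux_ball_isOpen hdX (hεpos a))
    · exact isOpen_iUnion fun W => W.2.1
  · apply Set.Subset.antisymm
    · intro x hx
      refine Set.mem_iInter.2 fun a => ⟨?_, ?_⟩
      · exact Set.mem_iUnion.2 ⟨⟨x, hx⟩, aux_ball_self hdX (hεpos a)⟩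
      · obtain ⟨η, hη, hηa⟩ := aux_half hreg hG (hεpos a)
        have hball : IsOpen (GBall dY ⟨x, hx⟩ η) := (hopenY _).1 (aux_ball_isOpen hdY hη)
        rw [isOpen_induced_iff] at hball
        obtain ⟨W, hWopen, hWeq⟩ := hball
        have hcond : ∀ u v : ↥Y, u.1 ∈ W → v.1 ∈ W → dY u v < ε a := by
          intro u v hu hv
          have hu' : dY ⟨x, hx⟩ u < η := by
            have : u ∈ Subtype.val ⁻¹' W := hu
            rw [hWeq] at this; exact this
          have hv' : dY ⟨x, hx⟩ v < η := by
            have : v ∈ Subtype.val ⁻¹' W := hv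
            rw [hWeq] at this; exact this
          calc dY u v ≤ dY u ⟨x, hx⟩ + dY ⟨x, hx⟩ v := hdY.triangle _ _ _
            _ = dY ⟨x, hx⟩ u + dY ⟨x, hx⟩ v := by rw [hdY.symm]
            _ < η + η := add_lt_add hu' hv'
            _ ≤ ε a := hηa
        refine Set.mem_iUnion.2 ⟨⟨W, hWopen, hcond⟩, ?_⟩
        have : (⟨x, hx⟩ : ↥Y) ∈ Subtype.val ⁻¹' W := by
          rw [hWeq]; exact aux_ball_self hdY hη
        exact this
    · intro x hx
      have hxa := Set.mem_iInter.1 hx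
      have hW : ∀ a, ∃ W : Set X, IsOpen W ∧
          (∀ u v : ↥Y, u.1 ∈ W → v.1 ∈ W → dY u v < ε a) ∧ x ∈ W := by
        intro a
        obtain ⟨W, hWx⟩ := Set.mem_iUnion.1 (hxa a).2
        exact ⟨W.1, W.2.1, W.2.2, hWx⟩
      choose W hWopen hWdiam hWx using hW
      set P : κ.ord.ToType → Set X := fun a =>
        (⋂ b : Set.Iic a, W b.1) ∩ GBall dX x (ε a) with hP
      have hPopen : ∀ a, IsOpen (P a) := by
        intro a
        refine IsOpen.inter ?_ ((hopenX _).1 (aux_ball_isOpen hdX (hεpos a)))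
        rw [← hopenX]
        exact aux_kadd hreg hG hdX _ (aux_mk_Iic hreg a)
          (fun b => (hopenX _).2 (hWopen b.1))
      have hPx : ∀ a, x ∈ P a := by
        intro a
        exact ⟨Set.mem_iInter.2 fun b => hWx b.1, aux_ball_self hdX (hεpos a)⟩
      have hmeets : ∀ a, ∃ y : ↥Y, y.1 ∈ P a := by
        intro a
        obtain ⟨θ, hθ, hθsub⟩ := (aux_isOpen_iff hdX hpos (P a)).1
          ((hopenX _).2 (hPopen a)) x (hPx a)
        obtain ⟨a', ha'⟩ := hεco θ hθ
        obtain ⟨y, hy⟩ := Set.mem_iUnion.1 (hxa a').1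
        refine ⟨y, hθsub ?_⟩
        simp only [GBall, Set.mem_setOf_eq] at hy ⊢
        calc dX x y.1 = dX y.1 x := hdX.symm _ _
          _ < ε a' := hy
          _ ≤ θ := ha'
      choose yseq hyseq using hmeets
      have hcauchy : GCauchy κ dY yseq := by
        intro δ hδ
        obtain ⟨a, ha⟩ := hεco δ hδ
        refine ⟨a, fun b hb c hc => ?_⟩
        have hyb : (yseq b).1 ∈ W a := by
          have := (hyseq b).1
          exact Set.mem_iInter.1 this ⟨a, hb⟩
        have hyc : (yseq c).1 ∈ W a := by
          have := (hyseq c).1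
          exact Set.mem_iInter.1 this ⟨a, hc⟩
        exact (hWdiam a _ _ hyb hyc).trans_le ha
      obtain ⟨yhat, hyhat⟩ := hcomplY yseq hcauchy
      have hxy : x = yhat.1 := by
        by_contra hne
        obtain ⟨O₁, O₂, hO₁, hO₂, hxO₁, hyO₂, hdisj⟩ := t2_separation hne
        obtain ⟨θ₁, hθ₁, hθ₁sub⟩ := (aux_isOpen_iff hdX hpos O₁).1 ((hopenX _).2 hO₁) x hxO₁
        obtain ⟨a₁, ha₁⟩ := aux_eps_co_lt hreg hG hεco hθ₁
        have hO₂' : IsOpen (Subtype.val ⁻¹' O₂ : Set ↥Y) := hO₂.preimage continuous_subtype_val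
        have hyO₂' : yhat ∈ (Subtype.val ⁻¹' O₂ : Set ↥Y) := hyO₂
        obtain ⟨θ₂, hθ₂, hθ₂sub⟩ := (aux_isOpen_iff hdY hpos _).1 ((hopenY _).2 hO₂') yhat hyO₂'
        obtain ⟨a₂, ha₂⟩ := hyhat θ₂ hθ₂
        set b := max a₁ a₂ with hb
        have hbO₁ : (yseq b).1 ∈ O₁ := by
          refine hθ₁sub ?_
          simp only [GBall, Set.mem_setOf_eq]
          have h1 : dX x (yseq b).1 < ε b := (hyseq b).2
          exact h1.trans_le ((hεanti b a₁ (le_max_left _ _)).trans ha₁.le)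
        have hbO₂ : (yseq b).1 ∈ O₂ := by
          have h1 : dY (yseq b) yhat < θ₂ := ha₂ b (le_max_right _ _)
          have h2 : yseq b ∈ GBall dY yhat θ₂ := by
            simp only [GBall, Set.mem_setOf_eq]
            rw [hdY.symm]; exact h1
          exact hθ₂sub h2
        exact Set.disjoint_left.1 hdisj hbO₁ hbO₂
      rw [hxy]; exact yhat.2


/-- A `κ`-sequence eventually inside a closed set has its `d`-limit inside it. -/
theorem aux_limit_closed {X : Type u} [t : TopologicalSpace X] {d : X → X → G}
    (hd : IsGMetric d) (hcomp : GMetricTopology d = t) (hpos : ∃ g : G, 0 < g)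
    {F : Set X} (hF : IsClosed F) {y : κ.ord.ToType → X} {x : X}
    (hconv : ∀ θ : G, 0 < θ → ∃ a, ∀ b, a ≤ b → d (y b) x < θ)
    {a₀ : κ.ord.ToType} (htail : ∀ b, a₀ ≤ b → y b ∈ F) : x ∈ F := by
  by_contra hx
  have hFc : IsOpen[GMetricTopology d] Fᶜ := by rw [hcomp]; exact hF.isOpen_compl
  obtain ⟨θ, hθ, hθsub⟩ := (aux_isOpen_iff hd hpos Fᶜ).1 hFc x hx
  obtain ⟨a₁, ha₁⟩ := hconv θ hθ
  have h1 : y (max a₀ a₁) ∈ F := htail _ (le_max_left _ _)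
  have h2 : y (max a₀ a₁) ∈ Fᶜ := by
    refine hθsub ?_
    simp only [GBall, Set.mem_setOf_eq]
    rw [hd.symm]
    exact ha₁ _ (le_max_right _ _)
  exact h2 h1

/-- Backward direction of Statement 8. -/
theorem aux_polish_of_gdelta (hreg : κ.IsRegular) (hunc : ℵ₀ < κ)
    (hG : HasDegree G κ) {X : Type u} [t : TopologicalSpace X]
    (hX : GPolish G κ X) (Y : Set X) (hY : IsGDeltaKappa κ Y) : GPolish G κ ↥Y := by
  classical
  obtain ⟨hwX, dX, hdX, hcompX, hcomplX⟩ := hX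
  obtain ⟨U, hUopen, hYeq⟩ := hY
  obtain ⟨ε, hεpos, hεhalf, hεco⟩ := aux_eps hunc hreg hG
  obtain ⟨hεanti, hεlt⟩ := aux_eps_anti hεpos hεhalf
  have hpos : ∃ g : G, 0 < g := aux_exists_pos hreg hG
  have hopenX : ∀ s : Set X, IsOpen[GMetricTopology dX] s ↔ IsOpen s := by
    intro s; rw [hcompX]
  -- clopen interpolation families
  have hC0 : ∀ i j : κ.ord.ToType, ∃ C : Set X, IsOpen C ∧ IsClosed C ∧
      {x | GBall dX x (ε j) ⊆ U i} ⊆ C ∧ C ⊆ U i := by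
    intro i j
    obtain ⟨η, hη, hηj⟩ := aux_half hreg hG (hεpos j)
    have hηlt : η < ε j := lt_of_lt_of_le (lt_add_of_pos_left η hη) hηj
    obtain ⟨C, hCopen, hCcl, h1, h2⟩ := aux_clopen hunc hreg hG hdX (U i) hη hηlt
    refine ⟨C, (hopenX _).1 hCopen, ?_, h1, ?_⟩
    · exact ⟨(hopenX _).1 hCcl.isOpen_compl⟩
    · intro x hx
      exact h2 hx (aux_ball_self hdX hη)
  choose C0 hC0open hC0closed hC0sub hC0sub2 using hC0
  set C : κ.ord.ToType → κ.ord.ToType → Set X := fun i j => ⋃ j' : Set.Iic j, C0 i j'.1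
    with hCdef
  have hCopen : ∀ i j, IsOpen (C i j) := fun i j => isOpen_iUnion fun j' => hC0open i j'.1
  have hCclosed : ∀ i j, IsClosed (C i j) := by
    intro i j
    rw [← isOpen_compl_iff, Set.compl_iUnion, ← hopenX]
    exact aux_kadd hreg hG hdX _ (aux_mk_Iic hreg j)
      (fun j' => (hopenX _).2 (hC0closed i j'.1).isOpen_compl)
  have hCsub : ∀ i j, C i j ⊆ U i := fun i j =>
    Set.iUnion_subset fun j' => hC0sub2 i j'.1
  have hCcov : ∀ i x, x ∈ U i → ∃ j, x ∈ C i j := by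
    intro i x hx
    obtain ⟨θ, hθ, hθsub⟩ := (aux_isOpen_iff hdX hpos (U i)).1 ((hopenX _).2 (hUopen i)) x hx
    obtain ⟨j, hj⟩ := hεco θ hθ
    refine ⟨j, Set.mem_iUnion.2 ⟨⟨j, Set.mem_Iic.2 le_rfl⟩, hC0sub i j ?_⟩⟩
    intro w hw
    simp only [GBall, Set.mem_setOf_eq] at hw
    exact hθsub (lt_of_lt_of_le hw hj)
  -- ranks
  have hYiff : ∀ z : X, z ∈ Y ↔ ∀ i, z ∈ U i := by
    intro z
    rw [hYeq]
    exact Set.mem_iInter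
  have hmemY : ∀ (y : ↥Y) (i : κ.ord.ToType), y.1 ∈ U i := fun y i => (hYiff y.1).1 y.2 i
  have hrank : ∀ (i : κ.ord.ToType) (y : ↥Y), ({j | y.1 ∈ C i j}).Nonempty := by
    intro i y
    obtain ⟨j, hj⟩ := hCcov i y.1 (hmemY y i)
    exact ⟨j, hj⟩
  set ρ : κ.ord.ToType → ↥Y → κ.ord.ToType := fun i y =>
    wellFounded_lt.min {j | y.1 ∈ C i j} (hrank i y) with hρdef
  have hρmem : ∀ i y, y.1 ∈ C i (ρ i y) := fun i y => wellFounded_lt.min_mem _ (hrank i y)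
  have hρle : ∀ i (y : ↥Y) j, y.1 ∈ C i j → ρ i y ≤ j := by
    intro i y j hj
    exact not_lt.1 (wellFounded_lt.not_lt_min {j | y.1 ∈ C i j} hj)
  have hρmin : ∀ i (y : ↥Y) j, j < ρ i y → y.1 ∉ C i j := by
    intro i y j hj hmem
    exact absurd (hρle i y j hmem) (not_le.2 hj)
  -- the ultrametric part
  set δf : ↥Y → ↥Y → G := fun x y =>
    if h : ∃ i, ρ i x ≠ ρ i y then ε (wellFounded_lt.min {i | ρ i x ≠ ρ i y} h) else 0
    with hδdef
  have hsetsymm : ∀ x y : ↥Y, {i | ρ i x ≠ ρ i y} = {i | ρ i y ≠ ρ i x} := by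
    intro x y; ext i; exact ne_comm
  have hδsymm : ∀ x y, δf x y = δf y x := by
    intro x y
    rw [hδdef]
    dsimp only
    by_cases h : ∃ i, ρ i x ≠ ρ i y
    · have h' : ∃ i, ρ i y ≠ ρ i x := by
        obtain ⟨i, hi⟩ := h; exact ⟨i, hi.symm⟩
      rw [dif_pos h, dif_pos h']
      congr 1
      simp_rw [hsetsymm x y]
    · have h' : ¬ ∃ i, ρ i y ≠ ρ i x := by
        intro h''; obtain ⟨i, hi⟩ := h''; exact h ⟨i, hi.symm⟩
      rw [dif_neg h, dif_neg h']
  have hδself : ∀ x, δf x x = 0 := by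
    intro x
    rw [hδdef]
    dsimp only
    rw [dif_neg]
    push_neg
    intro i; rfl
  have hδnonneg : ∀ x y, 0 ≤ δf x y := by
    intro x y
    rw [hδdef]
    dsimp only
    split
    · exact (hεpos _).le
    · exact le_rfl
  have hδge : ∀ (x y : ↥Y) i, ρ i x ≠ ρ i y → ε i ≤ δf x y := by
    intro x y i hi
    have h : ∃ i, ρ i x ≠ ρ i y := ⟨i, hi⟩
    rw [hδdef]
    dsimp only
    rw [dif_pos h]
    refine hεanti _ _ ?_
    exact not_lt.1 (wellFounded_lt.not_lt_min _ hi)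
  have hδlt : ∀ (x y : ↥Y) i₀, (∀ i, i ≤ i₀ → ρ i x = ρ i y) → δf x y < ε i₀ := by
    intro x y i₀ hagree
    rw [hδdef]
    dsimp only
    split
    · next h =>
      refine hεlt _ _ ?_
      by_contra hle
      push_neg at hle
      exact absurd (hagree _ hle) (wellFounded_lt.min_mem _ h)
    · exact hεpos i₀
  have hδtri : ∀ x y z : ↥Y, δf x z ≤ max (δf x y) (δf y z) := by
    intro x y z
    by_cases h : ∃ i, ρ i x ≠ ρ i z
    · have hxz : δf x z = ε (wellFounded_lt.min {i | ρ i x ≠ ρ i z} h) := by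
        rw [hδdef]; dsimp only; rw [dif_pos h]
      set m := wellFounded_lt.min {i | ρ i x ≠ ρ i z} h with hm
      have hmmem : ρ m x ≠ ρ m z := wellFounded_lt.min_mem _ h
      rcases ne_or_eq (ρ m x) (ρ m y) with hxy | hxy
      · exact hxz.le.trans (le_max_of_le_left (hxz ▸ hδge x y m hxy))
      · have hyz : ρ m y ≠ ρ m z := hxy ▸ hmmem
        exact hxz.le.trans (le_max_of_le_right (hxz ▸ hδge y z m hyz))
    · have : δf x z = 0 := by rw [hδdef]; dsimp only; rw [dif_neg h]
      rw [this]
      exact le_max_of_le_left (hδnonneg x y)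
  -- the metric
  set d' : ↥Y → ↥Y → G := fun x y => max (dX x.1 y.1) (δf x y) with hd'def
  have hd'metric : IsGMetric d' := by
    constructor
    · intro x y
      exact (hdX.nonneg x.1 y.1).trans (le_max_left _ _)
    · intro x y
      constructor
      · intro h
        have h1 : dX x.1 y.1 ≤ 0 := h ▸ le_max_left _ _
        have h2 : dX x.1 y.1 = 0 := le_antisymm h1 (hdX.nonneg _ _)
        exact Subtype.ext ((hdX.eq_zero_iff _ _).1 h2)
      · rintro rfl
        rw [hd'def]
        dsimp only
        rw [(hdX.eq_zero_iff _ _).2 rfl, hδself, max_self]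
    · intro x y
      rw [hd'def]
      dsimp only
      rw [hdX.symm, hδsymm]
    · intro x y z
      rw [hd'def]
      dsimp only
      refine max_le ?_ ?_
      · calc dX x.1 z.1 ≤ dX x.1 y.1 + dX y.1 z.1 := hdX.triangle _ _ _
          _ ≤ max (dX x.1 y.1) (δf x y) + max (dX y.1 z.1) (δf y z) :=
            add_le_add (le_max_left _ _) (le_max_left _ _)
      · refine (hδtri x y z).trans ?_
        rcases max_cases (δf x y) (δf y z) with ⟨hc, _⟩ | ⟨hc, _⟩ <;> rw [hc]
        · calc δf x y ≤ max (dX x.1 y.1) (δf x y) := le_max_right _ _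
            _ ≤ _ := le_add_of_nonneg_right
              ((hdX.nonneg y.1 z.1).trans (le_max_left _ _))
        · calc δf y z ≤ max (dX y.1 z.1) (δf y z) := le_max_right _ _
            _ ≤ _ := le_add_of_nonneg_left
              ((hdX.nonneg x.1 y.1).trans (le_max_left _ _))
  -- rank-equality neighborhoods
  have hagree_nbhd : ∀ (x : ↥Y) (i₀ : κ.ord.ToType), ∃ N : Set ↥Y, IsOpen N ∧ x ∈ N ∧
      ∀ y ∈ N, ∀ i, i ≤ i₀ → ρ i y = ρ i x := by
    intro x i₀
    set D : κ.ord.ToType → Set X := fun i =>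
      C i (ρ i x) ∩ ⋂ j : Set.Iio (ρ i x), (C i j.1)ᶜ with hD
    have hDopen : ∀ i, IsOpen (D i) := by
      intro i
      refine (hCopen _ _).inter ?_
      rw [← hopenX]
      exact aux_kadd hreg hG hdX _ ((Cardinal.mk_Iio_ord_toType _))
        (fun j => (hopenX _).2 (hCclosed i j.1).isOpen_compl)
    have hDx : ∀ i, x.1 ∈ D i := by
      intro i
      exact ⟨hρmem i x, Set.mem_iInter.2 fun j => hρmin i x j.1 j.2⟩
    refine ⟨Subtype.val ⁻¹' (⋂ i : Set.Iic i₀, D i.1), ?_, ?_, ?_⟩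
    · refine Continuous.isOpen_preimage continuous_subtype_val _ ?_
      rw [← hopenX]
      exact aux_kadd hreg hG hdX _ (aux_mk_Iic hreg i₀)
        (fun i => (hopenX _).2 (hDopen i.1))
    · exact Set.mem_iInter.2 fun i => hDx i.1
    · intro y hy i hi
      have hyD : y.1 ∈ D i := Set.mem_iInter.1 hy ⟨i, hi⟩
      have h1 : ρ i y ≤ ρ i x := hρle i y _ hyD.1
      rcases h1.lt_or_eq with h2 | h2
      · exact absurd (hρmem i y) (Set.mem_iInter.1 hyD.2 ⟨ρ i y, h2⟩)
      · exact h2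
  -- compatibility
  have hcompat : GCompatible d' := by
    rw [GCompatible, TopologicalSpace.ext_iff]
    intro s
    constructor
    · intro hs
      obtain hs' := (aux_isOpen_iff hd'metric hpos s).1 hs
      choose θ hθ hθsub using hs'
      have key : ∀ x : s, ∃ N : Set ↥Y, IsOpen N ∧ x.1 ∈ N ∧ N ⊆ s := by
        intro x
        obtain ⟨i₀, hi₀⟩ := aux_eps_co_lt hreg hG hεco (hθ x.1 x.2)
        obtain ⟨N, hNopen, hNx, hNagree⟩ := hagree_nbhd x.1 i₀
        have hball : IsOpen (Subtype.val ⁻¹' (GBall dX x.1.1 (θ x.1 x.2)) : Set ↥Y) := by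
          refine Continuous.isOpen_preimage continuous_subtype_val _ ?_
          exact (hopenX _).1 (aux_ball_isOpen hdX (hθ x.1 x.2))
        refine ⟨N ∩ Subtype.val ⁻¹' (GBall dX x.1.1 (θ x.1 x.2)), hNopen.inter hball,
          ⟨hNx, aux_ball_self hdX (hθ x.1 x.2)⟩, ?_⟩
        intro y hy
        refine hθsub x.1 x.2 ?_
        simp only [GBall, Set.mem_setOf_eq]
        rw [hd'def]
        dsimp only
        refine max_lt hy.2 ?_
        exact (hδlt x.1 y i₀ (fun i hi => (hNagree y hy.1 i hi).symm)).trans hi₀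
      choose N hNopen hNx hNsub using key
      have hseq : s = ⋃ x : s, N x := by
        apply Set.Subset.antisymm
        · intro x hx
          exact Set.mem_iUnion.2 ⟨⟨x, hx⟩, hNx ⟨x, hx⟩⟩
        · exact Set.iUnion_subset fun x => hNsub x
      rw [hseq]
      exact isOpen_iUnion fun x => hNopen x
    · intro hs
      rw [isOpen_induced_iff] at hs
      obtain ⟨W, hWopen, hWeq⟩ := hs
      rw [aux_isOpen_iff hd'metric hpos]
      intro x hx
      have hxW : x.1 ∈ W := by rw [← hWeq] at hx; exact hx
      obtain ⟨θ, hθ, hθsub⟩ := (aux_isOpen_iff hdX hpos W).1 ((hopenX _).2 hWopen) x.1 hxW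
      refine ⟨θ, hθ, ?_⟩
      intro y hy
      simp only [GBall, Set.mem_setOf_eq] at hy
      rw [hd'def] at hy
      dsimp only at hy
      have : y.1 ∈ W := hθsub (lt_of_le_of_lt (le_max_left _ _) hy)
      rw [← hWeq]
      exact this
  -- completeness
  have hcomplete : GCauchyComplete κ d' := by
    intro yseq hcauchy
    have hXcauchy : GCauchy κ dX (fun a => (yseq a).1) := by
      intro θ hθ
      obtain ⟨a, ha⟩ := hcauchy θ hθ
      refine ⟨a, fun b hb c hc => ?_⟩
      exact lt_of_le_of_lt (le_max_left _ _) (ha b hb c hc)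
    obtain ⟨x, hxconv⟩ := hcomplX _ hXcauchy
    -- eventual constancy of the ranks
    have hconst : ∀ i : κ.ord.ToType, ∃ a : κ.ord.ToType,
        ∀ b, a ≤ b → ρ i (yseq b) = ρ i (yseq a) := by
      intro i
      obtain ⟨i', hi'⟩ := aux_exists_gt hreg i
      obtain ⟨a, ha⟩ := hcauchy (ε i') (hεpos i')
      refine ⟨a, fun b hb => ?_⟩
      by_contra hne
      have h1 : ε i ≤ δf (yseq b) (yseq a) := hδge _ _ i hne
      have h2 : δf (yseq b) (yseq a) < ε i' :=
        lt_of_le_of_lt (le_max_right _ _) (ha b hb a le_rfl)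
      exact absurd (h1.trans_lt (h2.trans (hεlt i' i hi'))) (lt_irrefl _)
    choose aconst haconst using hconst
    set sfun : κ.ord.ToType → κ.ord.ToType := fun i => ρ i (yseq (aconst i)) with hsfun
    have htail_mem : ∀ i b, aconst i ≤ b → (yseq b).1 ∈ C i (sfun i) := by
      intro i b hb
      rw [hsfun]
      dsimp only
      rw [← haconst i b hb]
      exact hρmem i (yseq b)
    have hconv' : ∀ θ : G, 0 < θ → ∃ a, ∀ b, a ≤ b → dX ((yseq b).1) x < θ := hxconv
    have hxU : ∀ i, x ∈ C i (sfun i) := fun i =>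
      aux_limit_closed hdX hcompX hpos (hCclosed i (sfun i)) hconv' (htail_mem i)
    have hxY : x ∈ Y := (hYiff x).2 fun i => hCsub i (sfun i) (hxU i)
    set xhat : ↥Y := ⟨x, hxY⟩ with hxhat
    have hρxhat : ∀ i, ρ i xhat = sfun i := by
      intro i
      refine le_antisymm (hρle i xhat _ (hxU i)) ?_
      by_contra hlt
      rw [not_le] at hlt
      have htail' : ∀ b, aconst i ≤ b → (yseq b).1 ∈ (C i (ρ i xhat))ᶜ := by
        intro b hb
        refine hρmin i (yseq b) _ ?_
        have h2 : ρ i (yseq b) = sfun i := haconst i b hb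
        rw [h2]
        exact hlt
      have hnot : x ∈ (C i (ρ i xhat))ᶜ :=
        aux_limit_closed hdX hcompX hpos (hCopen i _).isClosed_compl hconv' htail'
      exact hnot (hρmem i xhat)
    refine ⟨xhat, ?_⟩
    intro θ hθ
    obtain ⟨i₀, hi₀⟩ := aux_eps_co_lt hreg hG hεco hθ
    obtain ⟨a₁, ha₁⟩ := hconv' θ hθ
    obtain ⟨A₀, hA₀⟩ := aux_bdd hreg (Set.range fun i : Set.Iic i₀ => aconst i.1)
      ((Cardinal.mk_range_le).trans_lt (aux_mk_Iic hreg i₀))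
    refine ⟨max a₁ A₀, fun b hb => ?_⟩
    have hδpart : δf (yseq b) xhat < θ := by
      have hagree : ∀ i, i ≤ i₀ → ρ i (yseq b) = ρ i xhat := by
        intro i hi
        have h1 : aconst i ≤ A₀ := hA₀ _ ⟨⟨i, Set.mem_Iic.2 hi⟩, rfl⟩
        have h2 : ρ i (yseq b) = sfun i :=
          haconst i b (h1.trans ((le_max_right _ _).trans hb))
        rw [h2, hρxhat i]
      exact (hδlt _ _ i₀ hagree).trans hi₀
    have hdpart : dX (yseq b).1 xhat.1 < θ := ha₁ b ((le_max_left _ _).trans hb)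
    exact max_lt hdpart hδpart
  exact ⟨aux_weight_subtype hwX Y, d', hd'metric, hcompat, hcomplete⟩

end Stmt8Aux

/-- a subspace of a 𝔾-Polish space is 𝔾-Polish iff it is G_δ^κ. -/
theorem stmt_8 (κ : Cardinal.{u}) (hreg : κ.IsRegular) (hunc : ℵ₀ < κ)
    (hpow : (2 : Cardinal.{u}) ^< κ = κ)
    (G : Type u) [AddCommGroup G] [LinearOrder G] [IsOrderedAddMonoid G] (hG : HasDegree G κ)
    (X : Type u) [TopologicalSpace X] [T2Space X] [RegularSpace X]
    (hX : GPolish G κ X) (Y : Set X) :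
    GPolish G κ ↥Y ↔ IsGDeltaKappa κ Y :=
    ⟨aux_gdelta_of_polish hreg hunc hG hX Y, aux_polish_of_gdelta hreg hunc hG hX Y⟩

end GDST
end
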